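/- arXiv:1211.2604 — 4 statements merged into one kernel-verified Lean document; each statement's English description precedes it below -/
import Mathlib

section
/- Let X, Y be Banach spaces, G ⊆ X open, a ∈ G, and f : G → Y a mapping. The following are equivalent: (i) the one-sided Hadamard directional derivative f'_{H+}(a,0) exists; (ii) the Hadamard directional derivative f'_H(a,0) exists; (iii) f'_H(a,0) exists and equals 0; (iv) f is Lipschitz at a, i.e., limsup_{y→a} ‖f(y)-f(a)‖/‖y-a‖ < ∞. -/
open Filter Topology Set Metric

section Defs
variable {X Y : Type*} [NormedAddCommGroup X] [NormedSpace ℝ X]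
  [NormedAddCommGroup Y] [NormedSpace ℝ Y]

/-- One-sided directional derivative: `f'₊(x,v) = L`. -/
def HasPosDirDeriv (f : X → Y) (x v : X) (L : Y) : Prop :=
  Tendsto (fun t : ℝ => t⁻¹ • (f (x + t • v) - f x)) (𝓝[>] (0:ℝ)) (𝓝 L)

/-- Two-sided directional derivative: `f'(x,v) = L`. -/
def HasDirDeriv (f : X → Y) (x v : X) (L : Y) : Prop :=
  Tendsto (fun t : ℝ => t⁻¹ • (f (x + t • v) - f x)) (𝓝[≠] (0:ℝ)) (𝓝 L)

/-- One-sided Hadamard directional derivative: `f'_{H+}(x,v) = L`. -/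
def HasHadamardPosDirDeriv (f : X → Y) (x v : X) (L : Y) : Prop :=
  Tendsto (fun p : X × ℝ => p.2⁻¹ • (f (x + p.2 • p.1) - f x))
    ((𝓝 v) ×ˢ (𝓝[>] (0:ℝ))) (𝓝 L)

/-- Two-sided Hadamard directional derivative: `f'_H(x,v) = L`. -/
def HasHadamardDirDeriv (f : X → Y) (x v : X) (L : Y) : Prop :=
  Tendsto (fun p : X × ℝ => p.2⁻¹ • (f (x + p.2 • p.1) - f x))
    ((𝓝 v) ×ˢ (𝓝[≠] (0:ℝ))) (𝓝 L)

/-- `f` is Lipschitz at the point `x`: `limsup_{y→x} ‖f y - f x‖/‖y-x‖ < ∞`. -/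
def LipschitzAtPt (f : X → Y) (x : X) : Prop :=
  ∃ K δ : ℝ, 0 < δ ∧ ∀ y, ‖y - x‖ < δ → ‖f y - f x‖ ≤ K * ‖y - x‖

/-- `A` is porous at `x` in the direction `v`. -/
def PorousAt (A : Set X) (x v : X) : Prop :=
  ∃ p > (0:ℝ), ∃ t : ℕ → ℝ, (∀ n, 0 < t n) ∧ Tendsto t atTop (𝓝 0) ∧
    ∀ n, ball (x + t n • v) (p * t n) ∩ A = ∅

/-- `A` is directionally porous. -/
def DirectionallyPorous (A : Set X) : Prop :=
  ∀ x ∈ A, ∃ v : X, v ≠ 0 ∧ PorousAt A x v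

/-- `A` is σ-directionally porous. -/
def SigmaDirectionallyPorous (A : Set X) : Prop :=
  ∃ s : ℕ → Set X, (∀ n, DirectionallyPorous (s n)) ∧ A = ⋃ n, s n

/-- The open cone `C(x,v,δ)`. -/
def Cone (x v : X) (δ : ℝ) : Set X :=
  {y : X | y ≠ x ∧ ‖v - ‖y - x‖⁻¹ • (y - x)‖ < δ}

/-- `f` is Hadamard differentiable at `x` with derivative `L`: the difference quotients
converge to `L v` uniformly in `v` from each compact set. -/
def HadamardDifferentiableAt (f : X → Y) (x : X) (L : X →L[ℝ] Y) : Prop :=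
  ∀ C : Set X, IsCompact C →
    TendstoUniformlyOn (fun (t : ℝ) (v : X) => t⁻¹ • (f (x + t • v) - f x))
      (fun v => L v) (𝓝[≠] (0:ℝ)) C

end Defs

section Aux
variable {X Y : Type*} [NormedAddCommGroup X] [NormedSpace ℝ X]
  [NormedAddCommGroup Y] [NormedSpace ℝ Y]

lemma twoSided_to_pos {f : X → Y} {a : X} {L : Y}
    (h : HasHadamardDirDeriv f a 0 L) : HasHadamardPosDirDeriv f a 0 L :=
  h.mono_left (Filter.prod_mono le_rfl
    (nhdsWithin_mono _ fun t (ht : t ∈ Ioi (0:ℝ)) => ne_of_gt ht))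

lemma pos_to_lipschitz {f : X → Y} {a : X} {L : Y}
    (h : HasHadamardPosDirDeriv f a 0 L) : LipschitzAtPt f a := by
  have h1 : ∀ᶠ p : X × ℝ in (𝓝 (0:X)) ×ˢ (𝓝[>] (0:ℝ)),
      ‖p.2⁻¹ • (f (a + p.2 • p.1) - f a) - L‖ < 1 := by
    have := h (Metric.ball_mem_nhds L one_pos)
    filter_upwards [this] with p hp
    simpa [dist_eq_norm] using hp
  rw [Filter.eventually_prod_iff] at h1
  obtain ⟨P, hP, Q, hQ, hPQ⟩ := h1
  obtain ⟨r, hr, hball⟩ := Metric.mem_nhds_iff.mp hP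
  obtain ⟨δ, hδ, hIoo⟩ : ∃ δ > 0, Ioo 0 δ ⊆ {t | Q t} := by
    rcases mem_nhdsGT_iff_exists_Ioo_subset.mp hQ with ⟨u, hu, hsub⟩
    exact ⟨u, hu, hsub⟩
  refine ⟨2 * (1 + ‖L‖) / r, r * δ / 4, by positivity, fun y hy => ?_⟩
  rcases eq_or_ne y a with rfl | hne
  · simp
  · have hya : (0:ℝ) < ‖y - a‖ := norm_pos_iff.mpr (sub_ne_zero.mpr hne)
    set t : ℝ := 2 * ‖y - a‖ / r with ht
    have htpos : 0 < t := by positivity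
    have htδ : t < δ := by
      rw [ht, div_lt_iff₀ hr]
      nlinarith
    set v : X := t⁻¹ • (y - a) with hv
    have hvnorm : ‖v‖ = r / 2 := by
      rw [hv, norm_smul, norm_inv, Real.norm_eq_abs, abs_of_pos htpos, ht]
      field_simp
    have hvP : P v := by
      apply hball
      rw [Metric.mem_ball, dist_zero_right, hvnorm]
      linarith
    have hyeq : a + t • v = y := by
      rw [hv, smul_smul, mul_inv_cancel₀ (ne_of_gt htpos), one_smul]
      abel
    have := hPQ hvP (hIoo ⟨htpos, htδ⟩)
    simp only [hyeq] at this
    have hb : ‖t⁻¹ • (f y - f a)‖ < 1 + ‖L‖ := by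
      have := norm_sub_norm_le (t⁻¹ • (f y - f a)) L
      linarith
    have hnorm : ‖t⁻¹ • (f y - f a)‖ = t⁻¹ * ‖f y - f a‖ := by
      rw [norm_smul, norm_inv, Real.norm_eq_abs, abs_of_pos htpos]
    rw [hnorm] at hb
    have : ‖f y - f a‖ < t * (1 + ‖L‖) := by
      rw [← inv_mul_lt_iff₀ htpos] at *
      linarith [hb]
    calc ‖f y - f a‖ ≤ t * (1 + ‖L‖) := le_of_lt this
      _ = 2 * (1 + ‖L‖) / r * ‖y - a‖ := by rw [ht]; field_simp

lemma lipschitz_to_twoSided {f : X → Y} {a : X}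
    (h : LipschitzAtPt f a) : HasHadamardDirDeriv f a 0 0 := by
  obtain ⟨K, δ, hδ, hK⟩ := h
  rw [HasHadamardDirDeriv, Metric.tendsto_nhds]
  intro ε hε
  have hv : ∀ᶠ v : X in 𝓝 0, ‖v‖ < min 1 (ε / (|K| + 1)) := by
    have : (0:ℝ) < min 1 (ε / (|K| + 1)) := by positivity
    filter_upwards [Metric.ball_mem_nhds (0:X) this] with v hv
    simpa [dist_zero_right] using hv
  have ht : ∀ᶠ t : ℝ in 𝓝[≠] 0, |t| < δ ∧ t ≠ 0 := by
    refine Filter.eventually_inf_principal.mpr ?_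
    filter_upwards [Metric.ball_mem_nhds (0:ℝ) hδ] with t h1 h2
    exact ⟨by simpa [Real.dist_eq] using h1, h2⟩
  filter_upwards [hv.prod_mk ht] with p hp
  obtain ⟨hv1, ht1, ht2⟩ := hp
  rw [dist_zero_right, norm_smul, norm_inv, Real.norm_eq_abs]
  have hsmall : ‖a + p.2 • p.1 - a‖ < δ := by
    rw [add_sub_cancel_left, norm_smul, Real.norm_eq_abs]
    calc |p.2| * ‖p.1‖ ≤ |p.2| * 1 := by
          apply mul_le_mul_of_nonneg_left (le_of_lt (lt_of_lt_of_le hv1 (min_le_left _ _))) (abs_nonneg _)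
      _ = |p.2| := mul_one _
      _ < δ := ht1
  have hb := hK _ hsmall
  rw [add_sub_cancel_left, norm_smul, Real.norm_eq_abs] at hb
  have htabs : 0 < |p.2| := abs_pos.mpr ht2
  calc |p.2|⁻¹ * ‖f (a + p.2 • p.1) - f a‖
      ≤ |p.2|⁻¹ * (K * (|p.2| * ‖p.1‖)) := by
        apply mul_le_mul_of_nonneg_left hb (by positivity)
    _ ≤ |p.2|⁻¹ * ((|K| + 1) * (|p.2| * ‖p.1‖)) := by
        apply mul_le_mul_of_nonneg_left _ (by positivity)
        apply mul_le_mul_of_nonneg_right _ (by positivity)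
        linarith [le_abs_self K]
    _ = (|K| + 1) * ‖p.1‖ := by field_simp
    _ < (|K| + 1) * (ε / (|K| + 1)) := by
        apply mul_lt_mul_of_pos_left (lt_of_lt_of_le hv1 (min_le_right _ _)) (by positivity)
    _ = ε := by field_simp

end Aux

theorem stmt7 {X Y : Type*} [NormedAddCommGroup X] [NormedSpace ℝ X] [CompleteSpace X]
    [NormedAddCommGroup Y] [NormedSpace ℝ Y] [CompleteSpace Y]
    (G : Set X) (hG : IsOpen G) (f : X → Y) (a : X) (ha : a ∈ G) :
    ((∃ L, HasHadamardPosDirDeriv f a 0 L) ↔ (∃ L, HasHadamardDirDeriv f a 0 L)) ∧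
    ((∃ L, HasHadamardDirDeriv f a 0 L) ↔ HasHadamardDirDeriv f a 0 0) ∧
    (HasHadamardDirDeriv f a 0 0 ↔ LipschitzAtPt f a) := by
  refine ⟨⟨fun ⟨L, hL⟩ => ⟨0, lipschitz_to_twoSided (pos_to_lipschitz hL)⟩,
    fun ⟨L, hL⟩ => ⟨L, twoSided_to_pos hL⟩⟩,
    ⟨fun ⟨L, hL⟩ => lipschitz_to_twoSided (pos_to_lipschitz (twoSided_to_pos hL)),
    fun h => ⟨0, h⟩⟩,
    ⟨fun h => pos_to_lipschitz (twoSided_to_pos h), lipschitz_to_twoSided⟩⟩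
end

section
/- Let X be a separable Banach space, Y a Banach space, G ⊆ X open, and f : G → Y a mapping. Let A be the set of all x ∈ G at which f is Lipschitz and for which there exist v, w ∈ X such that f'₊(x,v) and f'₊(x,w) exist but either f'₊(x,v-w) does not exist or f'₊(x,v-w) ≠ f'₊(x,v) - f'₊(x,w). Then A is σ-directionally porous. -/
open Filter Topology Set Metric

section PZ
variable {X Y : Type*} [NormedAddCommGroup X] [NormedSpace ℝ X]
  [NormedAddCommGroup Y] [NormedSpace ℝ Y]

noncomputable def pzM (m : ℕ) : ℝ := (m : ℝ) + 1
def pzJ (m : ℕ) : ℕ := 8 * (m + 1) ^ 3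
noncomputable def pzE (m : ℕ) : ℝ := (100 * pzM m * ((pzJ m : ℝ) + 1))⁻¹
noncomputable def pzR (m : ℕ) : ℝ := (1000 * (pzM m) ^ 2 * ((pzJ m : ℝ) + 1) ^ 2)⁻¹

lemma pzM_ge_one (m : ℕ) : (1:ℝ) ≤ pzM m := by
  simp only [pzM]; exact le_add_of_nonneg_left (Nat.cast_nonneg m)

lemma pzM_pos (m : ℕ) : (0:ℝ) < pzM m := lt_of_lt_of_le one_pos (pzM_ge_one m)

lemma pzJ_cast (m : ℕ) : ((pzJ m : ℝ)) = 8 * (pzM m) ^ 3 := by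
  simp only [pzJ, pzM]; push_cast; ring

lemma pzJ_ge (m : ℕ) : (8:ℝ) ≤ (pzJ m : ℝ) := by
  rw [pzJ_cast]
  have h := pzM_ge_one m
  nlinarith [pow_le_pow_left₀ (by norm_num : (0:ℝ) ≤ 1) h 3]

lemma pzE_pos (m : ℕ) : 0 < pzE m := by
  have := pzM_pos m
  have h2 : (0:ℝ) < (pzJ m : ℝ) + 1 := by positivity
  rw [pzE]; positivity

lemma pzR_pos (m : ℕ) : 0 < pzR m := by
  have := pzM_pos m
  have h2 : (0:ℝ) < (pzJ m : ℝ) + 1 := by positivity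
  rw [pzR]; positivity

/-- `(J+1) * (M * ρ) * 10 = ε'` -/
lemma pzR_eq (m : ℕ) : ((pzJ m : ℝ) + 1) * (pzM m * pzR m) * 10 = pzE m := by
  have hM := pzM_pos m
  have hJ : (0:ℝ) < (pzJ m : ℝ) + 1 := by positivity
  rw [pzR, pzE]
  field_simp
  ring

/-- `(J+1) * ε' * 100 = M⁻¹` -/
lemma pzE_eq (m : ℕ) : ((pzJ m : ℝ) + 1) * pzE m * 100 = (pzM m)⁻¹ := by
  have hM := pzM_pos m
  have hJ : (0:ℝ) < (pzJ m : ℝ) + 1 := by positivity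
  rw [pzE]
  field_simp

def PzPiece (f : X → Y) (u : ℕ → X) (m p a b : ℕ) : Set X :=
  {x | ∃ v w Lv Lw,
    (∀ y, ‖y - x‖ < (pzM m)⁻¹ → ‖f y - f x‖ ≤ pzM m * ‖y - x‖) ∧
    ‖v‖ ≤ pzM m ∧ ‖w‖ ≤ pzM m ∧ ‖v - u a‖ ≤ pzR m ∧ ‖w - u b‖ ≤ pzR m ∧
    (∀ s : ℝ, 0 < s → s < (pzM m)⁻¹ → s < ((p : ℝ) + 1)⁻¹ →
      ‖f (x + s • v) - f x - s • Lv‖ ≤ s * pzE m) ∧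
    (∀ s : ℝ, 0 < s → s < (pzM m)⁻¹ → s < ((p : ℝ) + 1)⁻¹ →
      ‖f (x + s • w) - f x - s • Lw‖ ≤ s * pzE m) ∧
    (∀ d : ℝ, 0 < d → ∃ t, 0 < t ∧ t < d ∧
      (pzM m)⁻¹ * t ≤ ‖f (x + t • (v - w)) - f x - t • (Lv - Lw)‖)}

lemma pz_key {S : Set X} {x : X} (hxS : x ∈ S)
    (h : ∀ c : X, c ≠ 0 → ¬ PorousAt S x c) {ρ : ℝ} (hρ : 0 < ρ) :
    ∀ c : X, ∃ δ > 0, ∀ τ, 0 < τ → τ < δ → ∃ z ∈ S, ‖z - (x + τ • c)‖ < ρ * τ := by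
  intro c
  by_cases hc : c = 0
  · exact ⟨1, one_pos, fun τ hτ _ => ⟨x, hxS, by simpa [hc] using mul_pos hρ hτ⟩⟩
  · by_contra hcon
    push_neg at hcon
    apply h c hc
    have H : ∀ n : ℕ, ∃ τ, 0 < τ ∧ τ < ((n:ℝ)+1)⁻¹ ∧
        ∀ z ∈ S, ρ * τ ≤ ‖z - (x + τ • c)‖ := by
      intro n
      obtain ⟨τ, h1, h2, h3⟩ := hcon ((n:ℝ)+1)⁻¹ (by positivity)
      exact ⟨τ, h1, h2, h3⟩
    choose t ht1 ht2 ht3 using H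
    refine ⟨ρ, hρ, t, ht1, ?_, ?_⟩
    · apply squeeze_zero (fun n => (ht1 n).le) (fun n => (ht2 n).le)
      simpa [one_div] using tendsto_one_div_add_atTop_nhds_zero_nat (𝕜 := ℝ)
    · intro n
      rw [eq_empty_iff_forall_notMem]
      rintro z ⟨hz1, hz2⟩
      rw [mem_ball, dist_eq_norm] at hz1
      exact absurd hz1 (not_lt.mpr (ht3 n z hz2))

lemma dirPorous_subset {S T : Set X} (h : T ⊆ S) (hS : DirectionallyPorous S) :
    DirectionallyPorous T := by
  intro x hx
  obtain ⟨v, hv, p, hp, t, h1, h2, h3⟩ := hS x (h hx)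
  refine ⟨v, hv, p, hp, t, h1, h2, fun n => ?_⟩
  exact eq_empty_of_subset_empty ((h3 n) ▸ inter_subset_inter_right _ h)

end PZ

section PZ2
variable {X Y : Type*} [NormedAddCommGroup X] [NormedSpace ℝ X]
  [NormedAddCommGroup Y] [NormedSpace ℝ Y]

lemma pz_smul_id {Z : Type*} [NormedAddCommGroup Z] [NormedSpace ℝ Z]
    {s : ℝ} (hs : s ≠ 0) (A L : Z) : A - s • L = s • (s⁻¹ • A - L) := by
  rw [smul_sub, smul_inv_smul₀ hs]

lemma pz_inv_le {a b : ℝ} (ha : 0 < a) (h : a⁻¹ ≤ b) : b⁻¹ ≤ a := by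
  have hb : 0 < b := lt_of_lt_of_le (inv_pos.mpr ha) h
  rw [← inv_inv a]
  gcongr

theorem pz_cover (f : X → Y) (u : ℕ → X) (hu : DenseRange u) {x : X}
    (hlip : LipschitzAtPt f x)
    (hder : ∃ v w Lv Lw, HasPosDirDeriv f x v Lv ∧ HasPosDirDeriv f x w Lw ∧
      ¬ HasPosDirDeriv f x (v - w) (Lv - Lw)) :
    ∃ m p a b : ℕ, x ∈ PzPiece f u m p a b := by
  obtain ⟨K, δ, hδ, hK⟩ := hlip
  obtain ⟨v, w, Lv, Lw, hv, hw, hbad⟩ := hder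
  rw [HasPosDirDeriv, Metric.tendsto_nhdsWithin_nhds] at hbad
  push_neg at hbad
  obtain ⟨ε0, hε0, hB⟩ := hbad
  obtain ⟨m, hm⟩ := exists_nat_ge (max (max K δ⁻¹) (max ε0⁻¹ (max ‖v‖ ‖w‖)))
  have hmM : (m : ℝ) ≤ pzM m := by rw [pzM]; linarith
  have hKM : K ≤ pzM m := le_trans (le_trans (le_max_left _ _) (le_max_left _ _)) (hm.trans hmM)
  have hδM : δ⁻¹ ≤ pzM m := le_trans (le_trans (le_max_right _ _) (le_max_left _ _)) (hm.trans hmM)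
  have hε0M : ε0⁻¹ ≤ pzM m :=
    le_trans (le_trans (le_max_left _ _) (le_max_right _ _)) (hm.trans hmM)
  have hvM : ‖v‖ ≤ pzM m :=
    le_trans (le_trans (le_max_left _ _) (le_trans (le_max_right _ _) (le_max_right _ _)))
      (hm.trans hmM)
  have hwM : ‖w‖ ≤ pzM m :=
    le_trans (le_trans (le_max_right _ _) (le_trans (le_max_right _ _) (le_max_right _ _)))
      (hm.trans hmM)
  have hMδ : (pzM m)⁻¹ ≤ δ := pz_inv_le hδ hδM
  have hMε0 : (pzM m)⁻¹ ≤ ε0 := pz_inv_le hε0 hε0M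
  rw [HasPosDirDeriv, Metric.tendsto_nhdsWithin_nhds] at hv hw
  obtain ⟨δ1, hδ1, H1⟩ := hv (pzE m) (pzE_pos m)
  obtain ⟨δ2, hδ2, H2⟩ := hw (pzE m) (pzE_pos m)
  obtain ⟨p, hp⟩ := exists_nat_ge (max δ1⁻¹ δ2⁻¹)
  have hpP : (p : ℝ) ≤ (p : ℝ) + 1 := by linarith
  have hP1 : ((p:ℝ)+1)⁻¹ ≤ δ1 := pz_inv_le hδ1 (le_trans (le_max_left _ _) (hp.trans hpP))
  have hP2 : ((p:ℝ)+1)⁻¹ ≤ δ2 := pz_inv_le hδ2 (le_trans (le_max_right _ _) (hp.trans hpP))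
  obtain ⟨a, ha⟩ := Metric.denseRange_iff.1 hu v (pzR m) (pzR_pos m)
  obtain ⟨b, hb⟩ := Metric.denseRange_iff.1 hu w (pzR m) (pzR_pos m)
  refine ⟨m, p, a, b, v, w, Lv, Lw, ?_, hvM, hwM, ?_, ?_, ?_, ?_, ?_⟩
  · intro y hy
    exact (hK y (lt_of_lt_of_le hy hMδ)).trans
      (mul_le_mul_of_nonneg_right hKM (norm_nonneg _))
  · rw [← dist_eq_norm]; exact ha.le
  · rw [← dist_eq_norm]; exact hb.le
  · intro s hs hsM hsP
    have h1 : dist s 0 < δ1 := by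
      rw [Real.dist_eq, sub_zero, abs_of_pos hs]; exact hsP.trans_le hP1
    have h2 : dist (s⁻¹ • (f (x + s • v) - f x)) Lv < pzE m := H1 (mem_Ioi.mpr hs) h1
    rw [dist_eq_norm] at h2
    rw [show f (x + s • v) - f x - s • Lv = s • (s⁻¹ • (f (x + s • v) - f x) - Lv) from
      pz_smul_id hs.ne' _ _, norm_smul, Real.norm_of_nonneg hs.le]
    exact mul_le_mul_of_nonneg_left h2.le hs.le
  · intro s hs hsM hsP
    have h1 : dist s 0 < δ2 := by
      rw [Real.dist_eq, sub_zero, abs_of_pos hs]; exact hsP.trans_le hP2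
    have h2 : dist (s⁻¹ • (f (x + s • w) - f x)) Lw < pzE m := H2 (mem_Ioi.mpr hs) h1
    rw [dist_eq_norm] at h2
    rw [show f (x + s • w) - f x - s • Lw = s • (s⁻¹ • (f (x + s • w) - f x) - Lw) from
      pz_smul_id hs.ne' _ _, norm_smul, Real.norm_of_nonneg hs.le]
    exact mul_le_mul_of_nonneg_left h2.le hs.le
  · intro d hd
    obtain ⟨s, hs0, hsd, hsB⟩ := hB d hd
    rw [mem_Ioi] at hs0
    refine ⟨s, hs0, ?_, ?_⟩
    · rwa [Real.dist_eq, sub_zero, abs_of_pos hs0] at hsd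
    · rw [dist_eq_norm] at hsB
      rw [show f (x + s • (v - w)) - f x - s • (Lv - Lw)
          = s • (s⁻¹ • (f (x + s • (v - w)) - f x) - (Lv - Lw)) from
        pz_smul_id hs0.ne' _ _, norm_smul, Real.norm_of_nonneg hs0.le]
      have := mul_le_mul_of_nonneg_left (hMε0.trans hsB) hs0.le
      linarith [this]
end PZ2

section PZ3
variable {X Y : Type*} [NormedAddCommGroup X] [NormedSpace ℝ X]
  [NormedAddCommGroup Y] [NormedSpace ℝ Y]

lemma pz_n3 {Z : Type*} [NormedAddCommGroup Z] (a b c : Z) :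
    ‖a - b - c‖ ≤ ‖a‖ + ‖b‖ + ‖c‖ := by
  calc ‖a - b - c‖ ≤ ‖a - b‖ + ‖c‖ := norm_sub_le _ _
    _ ≤ ‖a‖ + ‖b‖ + ‖c‖ := by linarith [norm_sub_le a b]

lemma pz_n4' {Z : Type*} [NormedAddCommGroup Z] (a b c d : Z) :
    ‖-a + b - c + d‖ ≤ ‖a‖ + ‖b‖ + ‖c‖ + ‖d‖ := by
  calc ‖-a + b - c + d‖ ≤ ‖-a + b - c‖ + ‖d‖ := norm_add_le _ _
    _ ≤ ‖-a + b‖ + ‖c‖ + ‖d‖ := by linarith [norm_sub_le (-a + b) c]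
    _ ≤ ‖a‖ + ‖b‖ + ‖c‖ + ‖d‖ := by
        have h1 : ‖-a + b‖ ≤ ‖a‖ + ‖b‖ := by
          calc ‖-a + b‖ ≤ ‖-a‖ + ‖b‖ := norm_add_le _ _
            _ = ‖a‖ + ‖b‖ := by rw [norm_neg]
        linarith

lemma pz_n4 {Z : Type*} [NormedAddCommGroup Z] (a b c d : Z) :
    ‖-a - b + c + d‖ ≤ ‖a‖ + ‖b‖ + ‖c‖ + ‖d‖ := by
  calc ‖-a - b + c + d‖ ≤ ‖-a - b + c‖ + ‖d‖ := norm_add_le _ _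
    _ ≤ ‖-a - b‖ + ‖c‖ + ‖d‖ := by linarith [norm_add_le (-a - b) c]
    _ ≤ ‖a‖ + ‖b‖ + ‖c‖ + ‖d‖ := by
        have h0 : -a - b = -(a + b) := by abel
        have h1 : ‖-a - b‖ ≤ ‖a‖ + ‖b‖ := by
          rw [h0, norm_neg]; exact norm_add_le _ _
        linarith

set_option maxHeartbeats 2000000 in
theorem pzPiece_porous (f : X → Y) (u : ℕ → X) (m p a b : ℕ) :
    DirectionallyPorous (PzPiece f u m p a b) := by
  classical
  intro x hx
  by_contra hcon
  push_neg at hcon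
  have hx' := hx
  obtain ⟨v, w, Lv, Lw, hxlip, hxv, hxw, hxva, hxwa, hxgv, hxgw, hxbad⟩ := hx'
  set M := pzM m with hMdef
  set ε' := pzE m with hEdef
  set ρ := pzR m with hRdef
  set Jr := ((pzJ m : ℝ)) with hJrdef
  set P := ((p : ℝ) + 1) with hPdef
  have hM1 : 1 ≤ M := pzM_ge_one m
  have hM0 : 0 < M := pzM_pos m
  have hP1 : 1 ≤ P := by rw [hPdef]; have := Nat.cast_nonneg (α := ℝ) p; linarith
  have hP0 : 0 < P := by linarith
  have hJr8 : 8 ≤ Jr := pzJ_ge m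
  have hJreq : Jr = 8 * M ^ 3 := pzJ_cast m
  have hE0 : 0 < ε' := pzE_pos m
  have hR0 : 0 < ρ := pzR_pos m
  have hRE : (Jr + 1) * (M * ρ) * 10 = ε' := pzR_eq m
  have hEM : (Jr + 1) * ε' * 100 = M⁻¹ := pzE_eq m
  have hMinv0 : 0 < M⁻¹ := inv_pos.mpr hM0
  have hMinv1 : M⁻¹ ≤ 1 := by
    rw [inv_le_one_iff₀]; right; exact hM1
  have hMρ0 : 0 < M * ρ := mul_pos hM0 hR0
  have hγ : M * ρ ≤ ε' := by
    nlinarith only [hRE, hMρ0, hJr8,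
      mul_nonneg (by linarith : (0:ℝ) ≤ 10 * (Jr + 1) - 1) hMρ0.le]
  have hJγ : Jr * (M * ρ) ≤ ε' := by
    nlinarith only [hRE, hMρ0, hJr8,
      mul_nonneg (by linarith : (0:ℝ) ≤ 10 * (Jr + 1) - Jr) hMρ0.le]
  have hEle1 : ε' ≤ 1 := by
    nlinarith only [hEM, hE0, hJr8, hMinv1,
      mul_nonneg (by linarith : (0:ℝ) ≤ Jr - 8) hE0.le]
  have hρ1 : (Jr + 1) * ρ ≤ 1 := by
    nlinarith only [hRE, hEle1, hR0, hJr8, hM1,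
      mul_nonneg (mul_nonneg (by linarith : (0:ℝ) ≤ Jr + 1) hR0.le)
        (by linarith : (0:ℝ) ≤ M - 1)]
  have hρsmall : 9 * ρ ≤ 1 := by
    nlinarith only [hρ1, hR0, hJr8,
      mul_nonneg (by linarith : (0:ℝ) ≤ Jr - 8) hR0.le]
  -- the key consequence of non-porosity in every direction
  have key := pz_key hx hcon hR0
  obtain ⟨δ1, hδ1, K1⟩ := key v
  obtain ⟨δ2, hδ2, K2⟩ := key (v - w)
  obtain ⟨δ3, hδ3, K3⟩ := key (v + w)
  obtain ⟨δ4, hδ4, K4⟩ := key (v + Jr • w)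
  obtain ⟨δ5, hδ5, K5⟩ := key w
  set T0 : ℝ := ((Jr + 2) * (M ^ 2 * P))⁻¹ with hT0def
  have hT0pos : 0 < T0 := by rw [hT0def]; positivity
  set T : ℝ := min (min (min δ1 δ2) (min δ3 δ4)) (min (δ5 / (Jr + 1)) T0) with hTdef
  have hTpos : 0 < T := by
    rw [hTdef]
    refine lt_min (lt_min (lt_min hδ1 hδ2) (lt_min hδ3 hδ4)) (lt_min ?_ hT0pos)
    positivity
  obtain ⟨t, ht0, htT, hQbad⟩ := hxbad T hTpos
  have htδ1 : t < δ1 := htT.trans_le (le_trans (min_le_left _ _) (le_trans (min_le_left _ _) (min_le_left _ _)))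
  have htδ2 : t < δ2 := htT.trans_le (le_trans (min_le_left _ _) (le_trans (min_le_left _ _) (min_le_right _ _)))
  have htδ3 : t < δ3 := htT.trans_le (le_trans (min_le_left _ _) (le_trans (min_le_right _ _) (min_le_left _ _)))
  have htδ4 : t < δ4 := htT.trans_le (le_trans (min_le_left _ _) (le_trans (min_le_right _ _) (min_le_right _ _)))
  have htδ5' : t < δ5 / (Jr + 1) := htT.trans_le (le_trans (min_le_right _ _) (min_le_left _ _))
  have htT0 : t < T0 := htT.trans_le (le_trans (min_le_right _ _) (min_le_right _ _))
  have htδ5 : Jr * t < δ5 := by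
    rw [lt_div_iff₀ (by linarith : (0:ℝ) < Jr + 1)] at htδ5'
    linarith only [htδ5', ht0]
  have hJrt0 : 0 ≤ Jr * t := by positivity
  have hbase : (Jr + 2) * t < (M ^ 2 * P)⁻¹ := by
    have h1 : (Jr + 2) * t < (Jr + 2) * T0 :=
      mul_lt_mul_of_pos_left htT0 (by linarith)
    have h2 : (Jr + 2) * T0 = (M ^ 2 * P)⁻¹ := by
      rw [hT0def, mul_inv, ← mul_assoc, mul_inv_cancel₀ (by linarith : (Jr:ℝ) + 2 ≠ 0), one_mul]
    linarith only [h1, h2]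
  have pzinv : ∀ a b : ℝ, 0 < a → a ≤ b → b⁻¹ ≤ a⁻¹ := fun a b ha h =>
    one_div a ▸ one_div b ▸ one_div_le_one_div_of_le ha h
  have hMPM : (M ^ 2 * P)⁻¹ ≤ M⁻¹ :=
    pzinv M (M ^ 2 * P) hM0 (by nlinarith only [hM1, hP1])
  have hM21 : (0:ℝ) ≤ M ^ 2 - 1 := by nlinarith only [hM1]
  have hMPP : (M ^ 2 * P)⁻¹ ≤ P⁻¹ :=
    pzinv P (M ^ 2 * P) hP0 (by nlinarith only [hP0.le, mul_nonneg hM21 hP0.le])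
  have htM : t < M⁻¹ := by linarith only [hbase, hMPM, ht0, hJrt0]
  have htP : t < P⁻¹ := by linarith only [hbase, hMPP, ht0, hJrt0]
  have h2tM : 2 * t < M⁻¹ := by linarith only [hbase, hMPM, hJrt0]
  have h2tP : 2 * t < P⁻¹ := by linarith only [hbase, hMPP, hJrt0]
  have hJtM : Jr * t < M⁻¹ := by linarith only [hbase, hMPM, ht0]
  have hJtP : Jr * t < P⁻¹ := by linarith only [hbase, hMPP, ht0]
  have hJt0 : 0 < Jr * t := by positivity
  have htlt : t < (M ^ 2 * P)⁻¹ := by linarith only [hbase, ht0, hJrt0]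
  have htMM : M * t < M⁻¹ := by
    have hMPM2 : (M ^ 2 * P)⁻¹ ≤ (M ^ 2)⁻¹ :=
      pzinv (M ^ 2) (M ^ 2 * P) (by positivity) (by nlinarith only [hM1, hP1])
    have hMM : M * (M ^ 2)⁻¹ = M⁻¹ := by
      field_simp
    have h1 : M * t < M * (M ^ 2 * P)⁻¹ := mul_lt_mul_of_pos_left htlt hM0
    have h2 : M * (M ^ 2 * P)⁻¹ ≤ M * (M ^ 2)⁻¹ := mul_le_mul_of_nonneg_left hMPM2 hM0.le
    linarith only [h1, h2, hMM]
  have h4tM : 4 * t < M⁻¹ := by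
    have : 0 ≤ (Jr - 2) * t := mul_nonneg (by linarith) ht0.le
    nlinarith only [hbase, hMPM, this]
  -- convenient products
  have hρt_le : ρ * t ≤ t := by nlinarith only [hρsmall, ht0.le, hR0.le]
  have hr4 : 4 * (ρ * t) ≤ t := by nlinarith only [hρsmall, ht0.le, hR0.le]
  have hr6 : 6 * (ρ * t) ≤ t := by nlinarith only [hρsmall, ht0.le, hR0.le]
  have hrbig : (2 + 2 * Jr) * (ρ * t) ≤ 2 * t := by
    nlinarith only [hρ1, ht0.le, hR0.le]
  have hrJ : ρ * (Jr * t) ≤ t := by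
    nlinarith only [hρ1, ht0.le, hR0.le, hJr8]
  have hr8 : ρ * (Jr * t) + t * (2 * ρ) + ρ * t ≤ 2 * t := by
    nlinarith only [hrJ, hρsmall, ht0.le, hR0.le]
  -- the five auxiliary points
  obtain ⟨z1, hz1S, hz1d⟩ := K1 t ht0 htδ1
  obtain ⟨zb, hzbS, hzbd⟩ := K2 t ht0 htδ2
  obtain ⟨u1, hu1S, hu1d⟩ := K3 t ht0 htδ3
  obtain ⟨uJ, huJS, huJd⟩ := K4 t ht0 htδ4
  obtain ⟨yJ, hyJS, hyJd⟩ := K5 (Jr * t) hJt0 htδ5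
  obtain ⟨v1, w1, L1v, L1w, h1lip, h1v, h1w, h1va, h1wa, h1gv, h1gw, -⟩ := hz1S
  obtain ⟨vb, wb, Lbv, Lbw, hblip, hbv, hbw, hbva, hbwa, hbgv, hbgw, -⟩ := hzbS
  obtain ⟨v0, w0, L0v, L0w, hu1lip, -, -, -, -, -, -, -⟩ := hu1S
  obtain ⟨v2, w2, L2v, L2w, huJlip, -, -, -, -, -, -, -⟩ := huJS
  obtain ⟨vy, wy, Lvy, Lwy, hylip, hyv, -, hyva, -, hygv, -, -⟩ := hyJS
  -- closeness of directions
  have hw1c : ‖w1 - w‖ ≤ 2 * ρ := by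
    have hid : w1 - w = (w1 - u b) - (w - u b) := by abel
    rw [hid]; exact (norm_sub_le _ _).trans (by linarith only [h1wa, hxwa])
  have hwbc : ‖wb - w‖ ≤ 2 * ρ := by
    have hid : wb - w = (wb - u b) - (w - u b) := by abel
    rw [hid]; exact (norm_sub_le _ _).trans (by linarith only [hbwa, hxwa])
  have hvyc : ‖vy - v‖ ≤ 2 * ρ := by
    have hid : vy - v = (vy - u a) - (v - u a) := by abel
    rw [hid]; exact (norm_sub_le _ _).trans (by linarith only [hyva, hxva])
  -- Estimates.
  have hsm : ∀ (s : ℝ) (z : X), 0 ≤ s → ‖s • z‖ = s * ‖z‖ := fun s z hs => by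
    rw [norm_smul, Real.norm_of_nonneg hs]
  have hsm' : ∀ (s : ℝ) (z : Y), 0 ≤ s → ‖s • z‖ = s * ‖z‖ := fun s z hs => by
    rw [norm_smul, Real.norm_of_nonneg hs]
  -- E1
  have A1 : ‖f (x + t • v) - f x - t • Lv‖ ≤ t * ε' := hxgv t ht0 htM htP
  have A2 : ‖f (x + t • v) - f z1‖ ≤ M * (ρ * t) := by
    have hd1 : ‖(x + t • v) - z1‖ ≤ ρ * t := by rw [norm_sub_rev]; exact hz1d.le
    have hlt : ‖(x + t • v) - z1‖ < M⁻¹ := by linarith only [hd1, hρt_le, htM]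
    exact (h1lip _ hlt).trans (mul_le_mul_of_nonneg_left hd1 hM0.le)
  have E1 : ‖f z1 - f x - t • Lv‖ ≤ t * ε' + M * (ρ * t) := by
    have hid : f z1 - f x - t • Lv
        = (f (x + t • v) - f x - t • Lv) - (f (x + t • v) - f z1) := by abel
    rw [hid]; exact (norm_sub_le _ _).trans (by linarith only [A1, A2])
  -- E3
  have A3 : ‖f (zb + t • wb) - f zb - t • Lbw‖ ≤ t * ε' := hbgw t ht0 htM htP
  have P3 : ‖(zb + t • wb) - z1‖ ≤ 4 * (ρ * t) := by
    have hid : (zb + t • wb) - z1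
        = (zb - (x + t • (v - w))) + t • (wb - w) + ((x + t • v) - z1) := by module
    rw [hid]
    have b2 : ‖t • (wb - w)‖ ≤ t * (2 * ρ) := by
      rw [hsm t _ ht0.le]; exact mul_le_mul_of_nonneg_left hwbc ht0.le
    have b3 : ‖(x + t • v) - z1‖ ≤ ρ * t := by rw [norm_sub_rev]; exact hz1d.le
    have h3 := norm_add₃_le (a := zb - (x + t • (v - w))) (b := t • (wb - w)) (c := (x + t • v) - z1)
    have b1 := hzbd.le
    linarith only [h3, b1, b2, b3]
  have A5 : ‖f (zb + t • wb) - f z1‖ ≤ M * (4 * (ρ * t)) := by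
    have hlt : ‖(zb + t • wb) - z1‖ < M⁻¹ := by linarith only [P3, hr4, htM]
    exact (h1lip _ hlt).trans (mul_le_mul_of_nonneg_left P3 hM0.le)
  have A6 : ‖f (x + t • (v - w)) - f zb‖ ≤ M * (ρ * t) := by
    have hd1 : ‖(x + t • (v - w)) - zb‖ ≤ ρ * t := by rw [norm_sub_rev]; exact hzbd.le
    have hlt : ‖(x + t • (v - w)) - zb‖ < M⁻¹ := by linarith only [hd1, hρt_le, htM]
    exact (hblip _ hlt).trans (mul_le_mul_of_nonneg_left hd1 hM0.le)
  have E3 : ‖f z1 - f (x + t • (v - w)) - t • Lbw‖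
      ≤ t * ε' + M * (4 * (ρ * t)) + M * (ρ * t) := by
    have hid : f z1 - f (x + t • (v - w)) - t • Lbw
        = (f (zb + t • wb) - f zb - t • Lbw) - (f (zb + t • wb) - f z1)
          - (f (x + t • (v - w)) - f zb) := by abel
    rw [hid]; exact (pz_n3 _ _ _).trans (by linarith only [A3, A5, A6])
  -- E4
  have A7 : ‖f (zb + (2 * t) • wb) - f zb - (2 * t) • Lbw‖ ≤ (2 * t) * ε' :=
    hbgw (2 * t) (by linarith only [ht0]) h2tM h2tP
  have P4 : ‖(zb + (2 * t) • wb) - u1‖ ≤ 6 * (ρ * t) := by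
    have hid : (zb + (2 * t) • wb) - u1
        = (zb - (x + t • (v - w))) + (2 * t) • (wb - w) + ((x + t • (v + w)) - u1) := by module
    rw [hid]
    have b2 : ‖(2 * t) • (wb - w)‖ ≤ (2 * t) * (2 * ρ) := by
      rw [hsm _ _ (by linarith only [ht0] : (0:ℝ) ≤ 2 * t)]
      exact mul_le_mul_of_nonneg_left hwbc (by linarith only [ht0])
    have b3 : ‖(x + t • (v + w)) - u1‖ ≤ ρ * t := by rw [norm_sub_rev]; exact hu1d.le
    have h3 := norm_add₃_le (a := zb - (x + t • (v - w))) (b := (2 * t) • (wb - w))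
      (c := (x + t • (v + w)) - u1)
    have b1 := hzbd.le
    linarith only [h3, b1, b2, b3]
  have A9 : ‖f (zb + (2 * t) • wb) - f u1‖ ≤ M * (6 * (ρ * t)) := by
    have hlt : ‖(zb + (2 * t) • wb) - u1‖ < M⁻¹ := by linarith only [P4, hr6, htM]
    exact (hu1lip _ hlt).trans (mul_le_mul_of_nonneg_left P4 hM0.le)
  have E4 : ‖f u1 - f (x + t • (v - w)) - (2 * t) • Lbw‖
      ≤ (2 * t) * ε' + M * (6 * (ρ * t)) + M * (ρ * t) := by
    have hid : f u1 - f (x + t • (v - w)) - (2 * t) • Lbw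
        = (f (zb + (2 * t) • wb) - f zb - (2 * t) • Lbw) - (f (zb + (2 * t) • wb) - f u1)
          - (f (x + t • (v - w)) - f zb) := by abel
    rw [hid]; exact (pz_n3 _ _ _).trans (by linarith only [A7, A9, A6])
  -- E5
  have A10 : ‖f (z1 + t • w1) - f z1 - t • L1w‖ ≤ t * ε' := h1gw t ht0 htM htP
  have P5 : ‖(z1 + t • w1) - u1‖ ≤ 4 * (ρ * t) := by
    have hid : (z1 + t • w1) - u1
        = (z1 - (x + t • v)) + t • (w1 - w) + ((x + t • (v + w)) - u1) := by module
    rw [hid]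
    have b2 : ‖t • (w1 - w)‖ ≤ t * (2 * ρ) := by
      rw [hsm t _ ht0.le]; exact mul_le_mul_of_nonneg_left hw1c ht0.le
    have b3 : ‖(x + t • (v + w)) - u1‖ ≤ ρ * t := by rw [norm_sub_rev]; exact hu1d.le
    have h3 := norm_add₃_le (a := z1 - (x + t • v)) (b := t • (w1 - w))
      (c := (x + t • (v + w)) - u1)
    have b1 := hz1d.le
    linarith only [h3, b1, b2, b3]
  have A11 : ‖f (z1 + t • w1) - f u1‖ ≤ M * (4 * (ρ * t)) := by
    have hlt : ‖(z1 + t • w1) - u1‖ < M⁻¹ := by linarith only [P5, hr4, htM]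
    exact (hu1lip _ hlt).trans (mul_le_mul_of_nonneg_left P5 hM0.le)
  have E5 : ‖f u1 - f z1 - t • L1w‖ ≤ t * ε' + M * (4 * (ρ * t)) := by
    have hid : f u1 - f z1 - t • L1w
        = (f (z1 + t • w1) - f z1 - t • L1w) - (f (z1 + t • w1) - f u1) := by abel
    rw [hid]; exact (norm_sub_le _ _).trans (by linarith only [A10, A11])
  -- EW : comparison of L1w and Lbw
  have hVb : t * ‖L1w - Lbw‖ ≤ 4 * (t * ε') + 16 * (M * (ρ * t)) := by
    have hid : t • (L1w - Lbw)
        = (f u1 - f (x + t • (v - w)) - (2 * t) • Lbw)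
          - (f z1 - f (x + t • (v - w)) - t • Lbw)
          - (f u1 - f z1 - t • L1w) := by module
    have h := pz_n3 (f u1 - f (x + t • (v - w)) - (2 * t) • Lbw)
      (f z1 - f (x + t • (v - w)) - t • Lbw) (f u1 - f z1 - t • L1w)
    rw [← hid, hsm' t _ ht0.le] at h
    linarith only [h, E3, E4, E5]
  -- E6
  have A12 : ‖f (z1 + (Jr * t) • w1) - f z1 - (Jr * t) • L1w‖ ≤ (Jr * t) * ε' :=
    h1gw (Jr * t) hJt0 hJtM hJtP
  have P6 : ‖(z1 + (Jr * t) • w1) - uJ‖ ≤ (2 + 2 * Jr) * (ρ * t) := by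
    have hid : (z1 + (Jr * t) • w1) - uJ
        = (z1 - (x + t • v)) + (Jr * t) • (w1 - w) + ((x + t • (v + Jr • w)) - uJ) := by
      module
    rw [hid]
    have b2 : ‖(Jr * t) • (w1 - w)‖ ≤ (Jr * t) * (2 * ρ) := by
      rw [hsm _ _ hJt0.le]; exact mul_le_mul_of_nonneg_left hw1c hJt0.le
    have b3 : ‖(x + t • (v + Jr • w)) - uJ‖ ≤ ρ * t := by rw [norm_sub_rev]; exact huJd.le
    have h3 := norm_add₃_le (a := z1 - (x + t • v)) (b := (Jr * t) • (w1 - w))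
      (c := (x + t • (v + Jr • w)) - uJ)
    have b1 := hz1d.le
    linarith only [h3, b1, b2, b3]
  have A13 : ‖f (z1 + (Jr * t) • w1) - f uJ‖ ≤ M * ((2 + 2 * Jr) * (ρ * t)) := by
    have hlt : ‖(z1 + (Jr * t) • w1) - uJ‖ < M⁻¹ := by linarith only [P6, hrbig, h2tM]
    exact (huJlip _ hlt).trans (mul_le_mul_of_nonneg_left P6 hM0.le)
  have E6 : ‖f uJ - f z1 - (Jr * t) • L1w‖ ≤ (Jr * t) * ε' + M * ((2 + 2 * Jr) * (ρ * t)) := by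
    have hid : f uJ - f z1 - (Jr * t) • L1w
        = (f (z1 + (Jr * t) • w1) - f z1 - (Jr * t) • L1w)
          - (f (z1 + (Jr * t) • w1) - f uJ) := by abel
    rw [hid]; exact (norm_sub_le _ _).trans (by linarith only [A12, A13])
  -- E7
  have A14 : ‖f (x + (Jr * t) • w) - f x - (Jr * t) • Lw‖ ≤ (Jr * t) * ε' :=
    hxgw (Jr * t) hJt0 hJtM hJtP
  have A15 : ‖f (x + (Jr * t) • w) - f yJ‖ ≤ M * (ρ * (Jr * t)) := by
    have hd1 : ‖(x + (Jr * t) • w) - yJ‖ ≤ ρ * (Jr * t) := by rw [norm_sub_rev]; exact hyJd.le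
    have hlt : ‖(x + (Jr * t) • w) - yJ‖ < M⁻¹ := by linarith only [hd1, hrJ, htM]
    exact (hylip _ hlt).trans (mul_le_mul_of_nonneg_left hd1 hM0.le)
  have E7 : ‖f yJ - f x - (Jr * t) • Lw‖ ≤ (Jr * t) * ε' + M * (ρ * (Jr * t)) := by
    have hid : f yJ - f x - (Jr * t) • Lw
        = (f (x + (Jr * t) • w) - f x - (Jr * t) • Lw) - (f (x + (Jr * t) • w) - f yJ) := by abel
    rw [hid]; exact (norm_sub_le _ _).trans (by linarith only [A14, A15])
  -- E8
  have A16 : ‖f (yJ + t • vy) - f yJ - t • Lvy‖ ≤ t * ε' := hygv t ht0 htM htP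
  have P8 : ‖(yJ + t • vy) - uJ‖ ≤ ρ * (Jr * t) + t * (2 * ρ) + ρ * t := by
    have hid : (yJ + t • vy) - uJ
        = (yJ - (x + (Jr * t) • w)) + t • (vy - v) + ((x + t • (v + Jr • w)) - uJ) := by
      module
    rw [hid]
    have b2 : ‖t • (vy - v)‖ ≤ t * (2 * ρ) := by
      rw [hsm t _ ht0.le]; exact mul_le_mul_of_nonneg_left hvyc ht0.le
    have b3 : ‖(x + t • (v + Jr • w)) - uJ‖ ≤ ρ * t := by rw [norm_sub_rev]; exact huJd.le
    have h3 := norm_add₃_le (a := yJ - (x + (Jr * t) • w)) (b := t • (vy - v))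
      (c := (x + t • (v + Jr • w)) - uJ)
    have b1 := hyJd.le
    linarith only [h3, b1, b2, b3]
  have A17 : ‖f (yJ + t • vy) - f uJ‖ ≤ M * (ρ * (Jr * t) + t * (2 * ρ) + ρ * t) := by
    have hlt : ‖(yJ + t • vy) - uJ‖ < M⁻¹ := by linarith only [P8, hr8, h2tM]
    exact (huJlip _ hlt).trans (mul_le_mul_of_nonneg_left P8 hM0.le)
  have E8 : ‖f uJ - f yJ - t • Lvy‖
      ≤ t * ε' + M * (ρ * (Jr * t) + t * (2 * ρ) + ρ * t) := by
    have hid : f uJ - f yJ - t • Lvy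
        = (f (yJ + t • vy) - f yJ - t • Lvy) - (f (yJ + t • vy) - f uJ) := by abel
    rw [hid]; exact (norm_sub_le _ _).trans (by linarith only [A16, A17])
  -- bounds on ‖Lv‖ and ‖Lvy‖
  have htv : t * ‖v‖ ≤ t * M := mul_le_mul_of_nonneg_left hxv ht0.le
  have NLv : t * ‖Lv‖ ≤ t * (M ^ 2 + ε') := by
    have hnorm : ‖(x + t • v) - x‖ = t * ‖v‖ := by
      rw [add_sub_cancel_left, hsm t _ ht0.le]
    have hlt : ‖(x + t • v) - x‖ < M⁻¹ := by
      rw [hnorm]; linarith only [htv, htMM]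
    have h1 : ‖f (x + t • v) - f x‖ ≤ M * (t * M) := by
      refine (hxlip _ hlt).trans ?_
      rw [hnorm]
      exact mul_le_mul_of_nonneg_left htv hM0.le
    have h2 : ‖t • Lv‖ ≤ ‖f (x + t • v) - f x‖ + t * ε' := by
      have hid : t • Lv = (f (x + t • v) - f x) - (f (x + t • v) - f x - t • Lv) := by abel
      rw [hid]; exact (norm_sub_le _ _).trans (by linarith only [A1])
    rw [hsm' t _ ht0.le] at h2
    nlinarith only [h1, h2]
  have htvy : t * ‖vy‖ ≤ t * M := mul_le_mul_of_nonneg_left hyv ht0.le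
  have NLvy : t * ‖Lvy‖ ≤ t * (M ^ 2 + ε') := by
    have hnorm : ‖(yJ + t • vy) - yJ‖ = t * ‖vy‖ := by
      rw [add_sub_cancel_left, hsm t _ ht0.le]
    have hlt : ‖(yJ + t • vy) - yJ‖ < M⁻¹ := by
      rw [hnorm]; linarith only [htvy, htMM]
    have h1 : ‖f (yJ + t • vy) - f yJ‖ ≤ M * (t * M) := by
      refine (hylip _ hlt).trans ?_
      rw [hnorm]
      exact mul_le_mul_of_nonneg_left htvy hM0.le
    have h2 : ‖t • Lvy‖ ≤ ‖f (yJ + t • vy) - f yJ‖ + t * ε' := by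
      have hid : t • Lvy = (f (yJ + t • vy) - f yJ) - (f (yJ + t • vy) - f yJ - t • Lvy) := by abel
      rw [hid]; exact (norm_sub_le _ _).trans (by linarith only [A16])
    rw [hsm' t _ ht0.le] at h2
    nlinarith only [h1, h2]
  -- HW1 : comparison of L1w and Lw
  have HW1 : (Jr * t) * ‖L1w - Lw‖
      ≤ ((Jr * t) * ε' + M * ((2 + 2 * Jr) * (ρ * t))) + (t * ε' + M * (ρ * t))
        + (t * ε' + M * (ρ * (Jr * t) + t * (2 * ρ) + ρ * t)) + ((Jr * t) * ε' + M * (ρ * (Jr * t)))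
        + t * (M ^ 2 + ε') + t * (M ^ 2 + ε') := by
    have hid : (Jr * t) • (L1w - Lw)
        = (-(f uJ - f z1 - (Jr * t) • L1w) - (f z1 - f x - t • Lv)
          + (f uJ - f yJ - t • Lvy) + (f yJ - f x - (Jr * t) • Lw)) + (t • Lvy - t • Lv) := by
      module
    have h0 := pz_n4 (f uJ - f z1 - (Jr * t) • L1w) (f z1 - f x - t • Lv)
      (f uJ - f yJ - t • Lvy) (f yJ - f x - (Jr * t) • Lw)
    have h1 : ‖(Jr * t) • (L1w - Lw)‖
        ≤ ‖(-(f uJ - f z1 - (Jr * t) • L1w) - (f z1 - f x - t • Lv)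
          + (f uJ - f yJ - t • Lvy) + (f yJ - f x - (Jr * t) • Lw))‖
          + ‖t • Lvy‖ + ‖t • Lv‖ := by
      rw [hid]
      have ha := norm_add_le (-(f uJ - f z1 - (Jr * t) • L1w) - (f z1 - f x - t • Lv)
          + (f uJ - f yJ - t • Lvy) + (f yJ - f x - (Jr * t) • Lw)) (t • Lvy - t • Lv)
      have hb := norm_sub_le (t • Lvy) (t • Lv)
      linarith only [ha, hb]
    rw [hsm' _ _ hJt0.le, hsm' t _ ht0.le, hsm' t _ ht0.le] at h1
    linarith only [h0, h1, E6, E1, E8, E7, NLv, NLvy]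
  -- final assembly
  have HQ : M⁻¹ * t
      ≤ (t * ε' + M * (4 * (ρ * t)) + M * (ρ * t)) + (t * ε' + M * (ρ * t))
        + t * ‖L1w - Lw‖ + t * ‖L1w - Lbw‖ := by
    have hid : f (x + t • (v - w)) - f x - t • (Lv - Lw)
        = -(f z1 - f (x + t • (v - w)) - t • Lbw) + (f z1 - f x - t • Lv)
          - t • (L1w - Lw) + t • (L1w - Lbw) := by
      module
    have h0 := pz_n4' (f z1 - f (x + t • (v - w)) - t • Lbw) (f z1 - f x - t • Lv)
      (t • (L1w - Lw)) (t • (L1w - Lbw))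
    rw [← hid] at h0
    rw [hsm' t _ ht0.le, hsm' t _ ht0.le] at h0
    linarith only [h0, hQbad, E3, E1]
  -- final numeric contradiction
  have hJrpos : (0:ℝ) ≤ Jr := by linarith only [hJr8]
  have HQ' := mul_le_mul_of_nonneg_left HQ hJrpos
  have hVb' := mul_le_mul_of_nonneg_left hVb hJrpos
  have hm1 : M * ρ * t ≤ ε' * t := mul_le_mul_of_nonneg_right hγ ht0.le
  have hm2 : Jr * (M * ρ) * t ≤ ε' * t := mul_le_mul_of_nonneg_right hJγ ht0.le
  have hq1 : (Jr + 1) * ε' * 100 * t = M⁻¹ * t := by rw [hEM]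
  have hq2 : Jr * (M⁻¹ * t) = 8 * (M ^ 2 * t) := by
    have h : Jr * M⁻¹ = 8 * M ^ 2 := by
      rw [hJreq]
      field_simp
    calc Jr * (M⁻¹ * t) = (Jr * M⁻¹) * t := by ring
      _ = 8 * (M ^ 2 * t) := by rw [h]; ring
  have hq3 : M⁻¹ * t ≤ t := by
    have := mul_le_mul_of_nonneg_right hMinv1 ht0.le
    linarith only [this]
  have hq4 : t ≤ M ^ 2 * t := by
    have hM2 : 1 ≤ M ^ 2 := by nlinarith only [hM1]
    have := mul_le_mul_of_nonneg_right hM2 ht0.le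
    linarith only [this]
  have hq5 : 0 ≤ ε' * t := by positivity
  have hq6 : 0 ≤ Jr * (ε' * t) := mul_nonneg hJrpos (by positivity)
  linarith only [HQ', HW1, hVb', hm1, hm2, hq1, hq2, hq3, hq4, hq5, hq6, ht0]
end PZ3

theorem stmt11 {X Y : Type*} [NormedAddCommGroup X] [NormedSpace ℝ X] [CompleteSpace X]
    [TopologicalSpace.SeparableSpace X]
    [NormedAddCommGroup Y] [NormedSpace ℝ Y] [CompleteSpace Y]
    (G : Set X) (hG : IsOpen G) (f : X → Y) :
    SigmaDirectionallyPorous {x : X | x ∈ G ∧ LipschitzAtPt f x ∧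
      ∃ v w Lv Lw, HasPosDirDeriv f x v Lv ∧ HasPosDirDeriv f x w Lw ∧
        ¬ HasPosDirDeriv f x (v - w) (Lv - Lw)} := by
  classical
  haveI : Nonempty X := ⟨0⟩
  set A := {x : X | x ∈ G ∧ LipschitzAtPt f x ∧
      ∃ v w Lv Lw, HasPosDirDeriv f x v Lv ∧ HasPosDirDeriv f x w Lw ∧
        ¬ HasPosDirDeriv f x (v - w) (Lv - Lw)} with hA
  set u := TopologicalSpace.denseSeq X with hu_def
  have hu : DenseRange u := TopologicalSpace.denseRange_denseSeq X
  let e : ℕ ≃ ℕ × ℕ × ℕ × ℕ := (Denumerable.eqv (ℕ × ℕ × ℕ × ℕ)).symm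
  refine ⟨fun n => PzPiece f u (e n).1 (e n).2.1 (e n).2.2.1 (e n).2.2.2 ∩ A,
    fun n => ?_, ?_⟩
  · exact dirPorous_subset inter_subset_left (pzPiece_porous f u _ _ _ _)
  · ext x
    simp only [mem_iUnion, mem_inter_iff]
    constructor
    · intro hxA
      obtain ⟨m, q, a, b, hmem⟩ := pz_cover f u hu hxA.2.1 hxA.2.2
      refine ⟨e.symm (m, q, a, b), ?_, hxA⟩
      simp only [e, Equiv.apply_symm_apply]
      exact hmem
    · rintro ⟨n, -, hxA⟩
      exact hxA
end

section
/- Let X, Y be Banach spaces, G ⊆ X open, and f : G → Y a mapping. For x ∈ G let U_x be the set of v ∈ X for which the one-sided directional derivative f'₊(x,v) exists. Then the set B of all x ∈ G such that f is Lipschitz at x and U_x is not closed in X is σ-directionally porous. -/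
open Filter Topology Set Metric

section Aux
variable {X Y : Type*} [NormedAddCommGroup X] [NormedSpace ℝ X]
  [NormedAddCommGroup Y] [NormedSpace ℝ Y]

/-- Auxiliary set for the decomposition. -/
def Aset (f : X → Y) (K m k : ℕ) : Set X :=
  {x | (∀ y, ‖y - x‖ < 1/((m:ℝ)+1) → ‖f y - f x‖ ≤ ((K:ℝ)+1) * ‖y - x‖) ∧
    ∃ u w : X, ‖u - w‖ ≤ 1/(8*((k:ℝ)+1)*((K:ℝ)+1)) ∧
      2/(((k:ℝ)+1)*((K:ℝ)+1)) ≤ ‖u + w‖ ∧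
      ∃ t : ℕ → ℝ, (∀ n, 0 < t n) ∧ Tendsto t atTop (𝓝 0) ∧
        ∀ n, t n / ((k:ℝ)+1) ≤ ‖f (x + t n • u) - f (x + t n • w)‖}

lemma aset_porous (f : X → Y) (K m k : ℕ) (S : Set X) (hS : S ⊆ Aset f K m k) :
    DirectionallyPorous S := by
  intro x hx
  obtain ⟨-, u, w, huw, huwn, t, ht0, htlim, htf⟩ := hS hx
  set c : ℝ := (k:ℝ)+1 with hc
  set C : ℝ := (K:ℝ)+1 with hC
  have hc0 : (0:ℝ) < c := by positivity
  have hC0 : (0:ℝ) < C := by positivity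
  set v : X := (2:ℝ)⁻¹ • (u + w) with hv
  have hvne : v ≠ 0 := by
    have h1 : (0:ℝ) < 2/(c*C) := by positivity
    have h2 : (0:ℝ) < ‖u + w‖ := lt_of_lt_of_le h1 huwn
    have h3 : (0:ℝ) < ‖v‖ := by
      rw [hv, norm_smul]
      have h4 : (0:ℝ) < ‖(2:ℝ)⁻¹‖ := by rw [Real.norm_eq_abs]; norm_num
      exact mul_pos h4 h2
    exact norm_pos_iff.mp h3
  refine ⟨v, hvne, 1/(16*c*C), by positivity, ?_⟩
  obtain ⟨N, hN⟩ := (Filter.eventually_atTop).1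
    (htlim.eventually (gt_mem_nhds (show (0:ℝ) < 1/((m:ℝ)+1) by positivity)))
  refine ⟨fun n => t (n+N), fun n => ht0 _, htlim.comp (tendsto_add_atTop_nat N), ?_⟩
  intro n
  rw [Set.eq_empty_iff_forall_notMem]
  rintro y ⟨hyb, hyS⟩
  obtain ⟨hLy, -⟩ := hS hyS
  set s : ℝ := t (n+N) with hs
  have hs0 : 0 < s := ht0 _
  have hsm : s < 1/((m:ℝ)+1) := hN (n+N) (by omega)
  have hdy : ‖(x + s • v) - y‖ < 1/(16*c*C) * s := by
    rw [← dist_eq_norm, dist_comm]; exact hyb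
  -- distance bounds
  have key : ∀ z : X, ‖z - v‖ ≤ (2:ℝ)⁻¹ * ‖u - w‖ → ‖(x + s • z) - y‖ ≤ s/(8*c*C) := by
    intro z hz
    have h1 : (x + s • z) - y = ((x + s • v) - y) + s • (z - v) := by
      rw [smul_sub]; abel
    calc ‖(x + s • z) - y‖ ≤ ‖(x + s • v) - y‖ + ‖s • (z - v)‖ := by
          rw [h1]; exact norm_add_le _ _
      _ ≤ 1/(16*c*C) * s + s * ((2:ℝ)⁻¹ * ‖u - w‖) := by
          rw [norm_smul, Real.norm_eq_abs, abs_of_pos hs0]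
          exact add_le_add hdy.le (mul_le_mul_of_nonneg_left hz hs0.le)
      _ ≤ 1/(16*c*C) * s + s * ((2:ℝ)⁻¹ * (1/(8*c*C))) := by
          have := mul_le_mul_of_nonneg_left huw (le_of_lt hs0)
          nlinarith [mul_le_mul_of_nonneg_left huw hs0.le]
      _ = s/(8*c*C) := by field_simp; ring
  have hu' : ‖u - v‖ ≤ (2:ℝ)⁻¹ * ‖u - w‖ := by
    have e : u - v = (2:ℝ)⁻¹ • (u - w) := by rw [hv]; module
    rw [e, norm_smul, Real.norm_eq_abs, abs_of_nonneg (by norm_num : (0:ℝ) ≤ 2⁻¹)]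
  have hw' : ‖w - v‖ ≤ (2:ℝ)⁻¹ * ‖u - w‖ := by
    have e : w - v = (2:ℝ)⁻¹ • (w - u) := by rw [hv]; module
    rw [e, norm_smul, Real.norm_eq_abs, norm_sub_rev u w,
      abs_of_nonneg (by norm_num : (0:ℝ) ≤ 2⁻¹)]
  have hcC1 : (1:ℝ) ≤ 8*c*C := by nlinarith
  have hsmall : s/(8*c*C) < 1/((m:ℝ)+1) :=
    lt_of_le_of_lt (by rw [div_le_iff₀ (by positivity)]; nlinarith) hsm
  have hdu := key u hu'
  have hdw := key w hw'
  have hfu : ‖f (x + s • u) - f y‖ ≤ C * (s/(8*c*C)) := by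
    have := hLy (x + s • u) (lt_of_le_of_lt hdu hsmall)
    calc ‖f (x + s • u) - f y‖ ≤ C * ‖(x + s • u) - y‖ := this
      _ ≤ C * (s/(8*c*C)) := mul_le_mul_of_nonneg_left hdu hC0.le
  have hfw : ‖f (x + s • w) - f y‖ ≤ C * (s/(8*c*C)) := by
    have := hLy (x + s • w) (lt_of_le_of_lt hdw hsmall)
    calc ‖f (x + s • w) - f y‖ ≤ C * ‖(x + s • w) - y‖ := this
      _ ≤ C * (s/(8*c*C)) := mul_le_mul_of_nonneg_left hdw hC0.le
  have htri : ‖f (x + s • u) - f (x + s • w)‖ ≤ 2 * (C * (s/(8*c*C))) := by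
    calc ‖f (x + s • u) - f (x + s • w)‖
        ≤ ‖f (x + s • u) - f y‖ + ‖f y - f (x + s • w)‖ := norm_sub_le_norm_sub_add_norm_sub _ _ _
      _ ≤ C * (s/(8*c*C)) + C * (s/(8*c*C)) := by
          rw [norm_sub_rev (f y)]
          exact add_le_add hfu hfw
      _ = 2 * (C * (s/(8*c*C))) := by ring
  have hlow := htf (n+N)
  rw [← hs] at hlow
  have h1 : 2 * (C * (s/(8*c*C))) = s/(4*c) := by field_simp; ring
  rw [h1] at htri
  have : s/c ≤ s/(4*c) := le_trans hlow htri
  rw [div_le_div_iff₀ hc0 (by positivity)] at this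
  nlinarith

set_option maxHeartbeats 1000000 in
lemma mem_aset (f : X → Y) [CompleteSpace Y] (x : X)
    (hLip : LipschitzAtPt f x)
    (hncl : ¬ IsClosed {v : X | ∃ L, HasPosDirDeriv f x v L}) :
    ∃ K m k : ℕ, x ∈ Aset f K m k := by
  set U := {v : X | ∃ L, HasPosDirDeriv f x v L} with hU
  obtain ⟨K₀, δ, hδ, hK₀⟩ := hLip
  obtain ⟨K, hK⟩ := exists_nat_ge K₀
  obtain ⟨m, hm⟩ := exists_nat_one_div_lt hδ
  set C : ℝ := (K:ℝ)+1 with hC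
  have hC0 : (0:ℝ) < C := by positivity
  have hLx : ∀ y, ‖y - x‖ < 1/((m:ℝ)+1) → ‖f y - f x‖ ≤ C * ‖y - x‖ := by
    intro y hy
    calc ‖f y - f x‖ ≤ K₀ * ‖y - x‖ := hK₀ y (lt_trans hy hm)
      _ ≤ C * ‖y - x‖ := mul_le_mul_of_nonneg_right (by rw [hC]; linarith) (norm_nonneg _)
  -- get a point in the closure but not in U
  have : ¬ (closure U ⊆ U) := fun h => hncl (closure_subset_iff_isClosed.1 h)
  obtain ⟨u, huc, huU⟩ := Set.not_subset.1 this
  set q : ℝ → Y := fun t => t⁻¹ • (f (x + t • u) - f x) with hq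
  -- q is not Cauchy along 𝓝[>] 0
  have hnc : ¬ Cauchy (Filter.map q (𝓝[>] (0:ℝ))) := by
    intro h
    obtain ⟨L, hL⟩ := CompleteSpace.complete h
    exact huU ⟨L, hL⟩
  rw [Metric.cauchy_iff] at hnc
  push_neg at hnc
  obtain ⟨ε, hε, hsep⟩ := hnc Filter.map_neBot
  -- for each n, two small parameters whose quotients are ε-separated
  have hpair : ∀ n : ℕ, ∃ τ ∈ Ioo (0:ℝ) (1/((n:ℝ)+1)), ∃ σ ∈ Ioo (0:ℝ) (1/((n:ℝ)+1)),
      ε ≤ dist (q τ) (q σ) := by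
    intro n
    have hIoo : Ioo (0:ℝ) (1/((n:ℝ)+1)) ∈ 𝓝[>] (0:ℝ) :=
      Ioo_mem_nhdsGT_of_mem ⟨le_refl _, by positivity⟩
    obtain ⟨a, ⟨τ, hτ, rfl⟩, b, ⟨σ, hσ, rfl⟩, hab⟩ := hsep _ (Filter.image_mem_map hIoo)
    exact ⟨τ, hτ, σ, hσ, hab⟩
  choose τ hτ σ hσ hd using hpair
  obtain ⟨k, hk⟩ := exists_nat_one_div_lt (show (0:ℝ) < ε/4 by linarith)
  set c : ℝ := (k:ℝ)+1 with hcdef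
  have hc0 : (0:ℝ) < c := by positivity
  have hεk : 4 ≤ ε * c := by
    rw [div_lt_iff₀ hc0] at hk
    nlinarith
  -- choose w in U close to u
  rw [Metric.mem_closure_iff] at huc
  obtain ⟨w, hwU, hwd⟩ := huc (1/(8*c*C)) (by positivity)
  rw [dist_eq_norm] at hwd
  obtain ⟨L, hL⟩ := hwU
  -- lower bound on ‖u‖, hence on ‖u+w‖
  have hqb : ∀ r : ℝ, 0 < r → r * ‖u‖ < 1/((m:ℝ)+1) → ‖q r‖ ≤ C * ‖u‖ := by
    intro r hr hru
    have h1 : ‖(x + r • u) - x‖ < 1/((m:ℝ)+1) := by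
      rw [add_sub_cancel_left, norm_smul, Real.norm_eq_abs, abs_of_pos hr]; exact hru
    have h2 := hLx _ h1
    rw [add_sub_cancel_left, norm_smul, Real.norm_eq_abs, abs_of_pos hr] at h2
    rw [hq]
    simp only []
    rw [norm_smul, Real.norm_eq_abs, abs_of_pos (inv_pos.2 hr)]
    calc r⁻¹ * ‖f (x + r • u) - f x‖ ≤ r⁻¹ * (C * (r * ‖u‖)) := by
          exact mul_le_mul_of_nonneg_left h2 (inv_pos.2 hr).le
      _ = C * ‖u‖ := by field_simp
  obtain ⟨n₀, hn₀⟩ := exists_nat_one_div_lt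
    (show (0:ℝ) < (1/((m:ℝ)+1))/(‖u‖+1) by positivity)
  have hsmall : ∀ r ∈ Ioo (0:ℝ) (1/((n₀:ℝ)+1)), r * ‖u‖ < 1/((m:ℝ)+1) := by
    intro r hr
    have h1 : r * ‖u‖ ≤ r * (‖u‖+1) := by nlinarith [hr.1]
    have h2 : r * (‖u‖+1) < (1/((n₀:ℝ)+1)) * (‖u‖+1) := by
      have := hr.2; nlinarith [norm_nonneg u]
    have h3 : (1/((n₀:ℝ)+1)) * (‖u‖+1) < 1/((m:ℝ)+1) := by
      rw [div_lt_div_iff₀ (by positivity) (by positivity)] at hn₀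
      calc (1/((n₀:ℝ)+1)) * (‖u‖+1) = 1 * (‖u‖+1) / ((n₀:ℝ)+1) := by ring
        _ < 1/((m:ℝ)+1) := by
            rw [div_lt_iff₀ (by positivity)]
            nlinarith
    linarith
  have hunorm : 2/(c*C) ≤ ‖u‖ := by
    have h1 := hqb _ (hτ n₀).1 (hsmall _ (hτ n₀))
    have h2 := hqb _ (hσ n₀).1 (hsmall _ (hσ n₀))
    have h3 : dist (q (τ n₀)) (q (σ n₀)) ≤ ‖q (τ n₀)‖ + ‖q (σ n₀)‖ := by
      rw [dist_eq_norm]; exact norm_sub_le _ _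
    have h4 : ε ≤ 2 * (C * ‖u‖) := by
      have := hd n₀; linarith
    rw [div_le_iff₀ (by positivity)]
    nlinarith [mul_le_mul_of_nonneg_right h4 hc0.le, hεk, hε.le, hC0.le, hc0.le]
  have hsum : 2/(c*C) ≤ ‖u + w‖ := by
    have h1 : u + w = (2:ℝ) • u - (u - w) := by module
    have h2 : ‖(2:ℝ) • u‖ - ‖u - w‖ ≤ ‖u + w‖ := by
      rw [h1]; exact norm_sub_norm_le _ _
    have h3 : ‖(2:ℝ) • u‖ = 2 * ‖u‖ := by
      rw [norm_smul, Real.norm_eq_abs]; norm_num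
    have e1 : (1:ℝ)/(8*c*C) ≤ 2/(c*C) := by
      rw [div_le_div_iff₀ (by positivity) (by positivity)]
      nlinarith
    have e2 : 2 * (2/(c*C)) ≤ 2 * ‖u‖ := by linarith
    rw [h3] at h2
    have h5 : ‖u - w‖ ≤ 2/(c*C) := le_trans hwd.le e1
    linarith
  -- build the sequence along which f oscillates
  set qw : ℝ → Y := fun t => t⁻¹ • (f (x + t • w) - f x) with hqw
  set τ' : ℕ → ℝ := fun n => if ε/2 ≤ dist (q (τ n)) L then τ n else σ n with hτ'
  have hτ'mem : ∀ n : ℕ, τ' n ∈ Ioo (0:ℝ) (1/((n:ℝ)+1)) := by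
    intro n; rw [hτ']; dsimp only
    split_ifs
    · exact hτ n
    · exact hσ n
  have hτ'L : ∀ n, ε/2 ≤ dist (q (τ' n)) L := by
    intro n; rw [hτ']; dsimp only
    split_ifs with h
    · exact h
    · push_neg at h
      have h1 := hd n
      have h2 : dist (q (τ n)) (q (σ n)) ≤ dist (q (τ n)) L + dist L (q (σ n)) :=
        dist_triangle _ _ _
      rw [dist_comm L] at h2
      linarith
  have hτ'0 : Tendsto τ' atTop (𝓝[>] (0:ℝ)) := by
    apply tendsto_nhdsWithin_of_tendsto_nhds_of_eventually_within
    · exact squeeze_zero (fun n => (hτ'mem n).1.le) (fun n => (hτ'mem n).2.le)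
        tendsto_one_div_add_atTop_nhds_zero_nat
    · exact Filter.Eventually.of_forall (fun n => (hτ'mem n).1)
  have hqwlim : Tendsto (fun n => qw (τ' n)) atTop (𝓝 L) := hL.comp hτ'0
  obtain ⟨N, hN⟩ := (Metric.tendsto_atTop.1 hqwlim) (ε/4) (by linarith)
  refine ⟨K, m, k, hLx, u, w, hwd.le, hsum, fun n => τ' (n+N),
    fun n => (hτ'mem (n+N)).1,
    ((hτ'0.mono_right nhdsWithin_le_nhds).comp (tendsto_add_atTop_nat N)), ?_⟩
  intro n
  set s : ℝ := τ' (n+N) with hsdef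
  have hs0 : 0 < s := (hτ'mem (n+N)).1
  have h1 : ε/2 ≤ dist (q s) L := hτ'L (n+N)
  have h2 : dist (qw s) L < ε/4 := hN (n+N) (by omega)
  have h3 : ε/4 ≤ dist (q s) (qw s) := by
    have := dist_triangle (q s) (qw s) L
    linarith
  have h4 : dist (q s) (qw s) = s⁻¹ * ‖f (x + s • u) - f (x + s • w)‖ := by
    rw [dist_eq_norm, hq, hqw]
    dsimp only
    rw [← smul_sub, norm_smul, Real.norm_eq_abs, abs_of_pos (inv_pos.2 hs0)]
    congr 2
    abel
  rw [h4] at h3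
  have h5 : s * (ε/4) ≤ ‖f (x + s • u) - f (x + s • w)‖ := by
    have := mul_le_mul_of_nonneg_left h3 hs0.le
    rw [← mul_assoc, mul_inv_cancel₀ (ne_of_gt hs0), one_mul] at this
    linarith
  have h6 : s/c ≤ s * (ε/4) := by
    rw [div_le_iff₀ hc0]
    nlinarith [mul_le_mul_of_nonneg_left hεk hs0.le]
  linarith

end Aux


theorem stmt12 {X Y : Type*} [NormedAddCommGroup X] [NormedSpace ℝ X] [CompleteSpace X]
    [NormedAddCommGroup Y] [NormedSpace ℝ Y] [CompleteSpace Y]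
    (G : Set X) (hG : IsOpen G) (f : X → Y) :
    SigmaDirectionallyPorous {x : X | x ∈ G ∧ LipschitzAtPt f x ∧
      ¬ IsClosed {v : X | ∃ L, HasPosDirDeriv f x v L}} := by
  set B := {x : X | x ∈ G ∧ LipschitzAtPt f x ∧
      ¬ IsClosed {v : X | ∃ L, HasPosDirDeriv f x v L}} with hB
  refine ⟨fun n => Aset f n.unpair.1 n.unpair.2.unpair.1 n.unpair.2.unpair.2 ∩ B,
    fun n => aset_porous f _ _ _ _ Set.inter_subset_left, ?_⟩
  ext x
  simp only [Set.mem_iUnion]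
  constructor
  · intro hx
    obtain ⟨K, m, k, hmem⟩ := mem_aset f x hx.2.1 hx.2.2
    exact ⟨Nat.pair K (Nat.pair m k), by
      rw [Nat.unpair_pair]; dsimp only; rw [Nat.unpair_pair]; exact ⟨hmem, hx⟩⟩
  · rintro ⟨n, -, hx⟩
    exact hx
end

section
/- Let X be a separable Banach space, Y a Banach space, G ⊆ X open, and f : G → Y a mapping. Then there exists a σ-directionally porous set C ⊆ G such that for every x ∈ G \ C at which f is Lipschitz, the set U_x of directions u ∈ X in which f'₊(x,u) exists is a closed linear subspace of X, and the mapping u ↦ f'₊(x,u) is linear on U_x. -/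
open Filter Topology Set Metric

set_option linter.unusedSectionVars false
set_option linter.unusedVariables false


section Aux
variable {X Y : Type*} [NormedAddCommGroup X] [NormedSpace ℝ X]
  [NormedAddCommGroup Y] [NormedSpace ℝ Y]

/-- Centered Lipschitz condition. -/
def LipC (f : X → Y) (x : X) (K δ : ℝ) : Prop :=
  ∀ y : X, ‖y - x‖ ≤ δ → ‖f y - f x‖ ≤ K * ‖y - x‖

/-- Uniform one-sided derivative estimate up to scale δ with precision ε. -/
def UD (f : X → Y) (x u : X) (L : Y) (δ ε : ℝ) : Prop :=
  ∀ s : ℝ, 0 < s → s ≤ δ → ‖f (x + s • u) - f x - s • L‖ ≤ ε * s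

lemma LipC.mono {f : X → Y} {x : X} {K δ δ' : ℝ} (h : LipC f x K δ) (hδ : δ' ≤ δ) :
    LipC f x K δ' := fun y hy => h y (hy.trans hδ)

lemma UD.mono {f : X → Y} {x u : X} {L : Y} {δ δ' ε : ℝ} (h : UD f x u L δ ε) (hδ : δ' ≤ δ) :
    UD f x u L δ' ε := fun s hs hs' => h s hs (hs'.trans hδ)

lemma hasPos_zero (f : X → Y) (x : X) : HasPosDirDeriv f x 0 0 := by
  have : (fun t : ℝ => t⁻¹ • (f (x + t • (0:X)) - f x)) = fun _ => (0:Y) := by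
    funext t; simp
  rw [HasPosDirDeriv, this]; exact tendsto_const_nhds

lemma hasPos_unique {f : X → Y} {x u : X} {L L' : Y}
    (h : HasPosDirDeriv f x u L) (h' : HasPosDirDeriv f x u L') : L = L' :=
  tendsto_nhds_unique h h'

lemma tendsto_mul_pos_nhdsWithin {c : ℝ} (hc : 0 < c) :
    Tendsto (fun t : ℝ => c * t) (𝓝[>] (0:ℝ)) (𝓝[>] (0:ℝ)) := by
  apply tendsto_nhdsWithin_of_tendsto_nhds_of_eventually_within
  · have : Tendsto (fun t : ℝ => c * t) (𝓝 (0:ℝ)) (𝓝 (c * 0)) :=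
      (continuous_const.mul continuous_id).tendsto 0
    simpa using this.mono_left nhdsWithin_le_nhds
  · filter_upwards [self_mem_nhdsWithin] with t ht
    exact mul_pos hc ht

lemma hasPos_smul {f : X → Y} {x u : X} {L : Y} {c : ℝ} (hc : 0 < c)
    (h : HasPosDirDeriv f x u L) : HasPosDirDeriv f x (c • u) (c • L) := by
  have h2 := (h.comp (tendsto_mul_pos_nhdsWithin hc)).const_smul c
  apply h2.congr'
  filter_upwards [self_mem_nhdsWithin] with t ht
  simp only [Function.comp, smul_smul]
  rw [mul_comm c t]
  congr 2
  have ht' : (0:ℝ) < t := ht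
  field_simp

end Aux

section Aux2
variable {X Y : Type*} [NormedAddCommGroup X] [NormedSpace ℝ X]
  [NormedAddCommGroup Y] [NormedSpace ℝ Y]

lemma quotient_eq {f : X → Y} {x u : X} {L : Y} {t : ℝ} (ht : 0 < t) :
    ‖f (x + t • u) - f x - t • L‖ = t * ‖t⁻¹ • (f (x + t • u) - f x) - L‖ := by
  have : f (x + t • u) - f x - t • L = t • (t⁻¹ • (f (x + t • u) - f x) - L) := by
    rw [smul_sub, smul_smul, mul_inv_cancel₀ ht.ne', one_smul]
  rw [this, norm_smul, Real.norm_eq_abs, abs_of_pos ht]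

lemma ud_of_hasPos {f : X → Y} {x u : X} {L : Y} (h : HasPosDirDeriv f x u L)
    {ε : ℝ} (hε : 0 < ε) : ∃ δ > (0:ℝ), UD f x u L δ ε := by
  have h2 := Metric.tendsto_nhds.1 h ε hε
  rw [eventually_nhdsWithin_iff, Metric.eventually_nhds_iff] at h2
  obtain ⟨δ, hδ, hδ2⟩ := h2
  refine ⟨δ/2, by positivity, fun s hs hs2 => ?_⟩
  have hd : dist s 0 < δ := by
    rw [Real.dist_eq, sub_zero, abs_of_pos hs]; linarith
  have := hδ2 hd hs
  rw [dist_eq_norm] at this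
  rw [quotient_eq hs]
  have : ‖s⁻¹ • (f (x + s • u) - f x) - L‖ ≤ ε := le_of_lt this
  nlinarith [norm_nonneg (s⁻¹ • (f (x + s • u) - f x) - L), hs.le]

lemma freq_of_not_hasPos {f : X → Y} {x u : X} {L : Y} (h : ¬ HasPosDirDeriv f x u L) :
    ∃ ε > (0:ℝ), ∀ δ' > (0:ℝ), ∃ t : ℝ, 0 < t ∧ t < δ' ∧
      ε * t ≤ ‖f (x + t • u) - f x - t • L‖ := by
  rw [HasPosDirDeriv, Metric.tendsto_nhds] at h
  push_neg at h
  obtain ⟨ε, hε, hfreq⟩ := h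
  refine ⟨ε, hε, fun δ' hδ' => ?_⟩
  have := (nhdsGT_basis (0:ℝ)).frequently_iff.1 hfreq δ' hδ'
  obtain ⟨t, ⟨ht0, htδ⟩, hbad⟩ := this
  rw [dist_eq_norm] at hbad
  refine ⟨t, ht0, htδ, ?_⟩
  rw [quotient_eq ht0]
  nlinarith [hbad, ht0]

lemma norm_deriv_le {f : X → Y} {x u : X} {L : Y} {K δL : ℝ} (hδ : 0 < δL)
    (hLip : LipC f x K δL) (h : HasPosDirDeriv f x u L) : ‖L‖ ≤ K * ‖u‖ := by
  have hev : ∀ᶠ t in 𝓝[>] (0:ℝ), ‖t⁻¹ • (f (x + t • u) - f x)‖ ≤ K * ‖u‖ := by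
    have hmem : Ioo (0:ℝ) (δL / (‖u‖ + 1)) ∈ 𝓝[>] (0:ℝ) :=
      Ioo_mem_nhdsGT_of_mem (by constructor <;> [rfl; positivity])
    filter_upwards [hmem] with t ⟨ht0, ht1⟩
    have hn : ‖(x + t • u) - x‖ ≤ δL := by
      rw [add_sub_cancel_left, norm_smul, Real.norm_eq_abs, abs_of_pos ht0]
      have h1 : ‖u‖ + 1 > 0 := by positivity
      rw [lt_div_iff₀ h1] at ht1
      nlinarith [norm_nonneg u]
    have := hLip _ hn
    rw [add_sub_cancel_left, norm_smul, Real.norm_eq_abs, abs_of_pos ht0] at this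
    rw [norm_smul, Real.norm_eq_abs, abs_of_pos (inv_pos.2 ht0)]
    rw [inv_mul_le_iff₀ ht0]
    calc ‖f (x + t • u) - f x‖ ≤ K * (t * ‖u‖) := this
    _ = t * (K * ‖u‖) := by ring
  exact le_of_tendsto h.norm hev

end Aux2

section Porous
variable {X Y : Type*} [NormedAddCommGroup X] [NormedSpace ℝ X]
  [NormedAddCommGroup Y] [NormedSpace ℝ Y]

lemma dirPorous_mono {A A' : Set X} (hsub : A' ⊆ A) (h : DirectionallyPorous A) :
    DirectionallyPorous A' := by
  intro x hx
  obtain ⟨v, hv, p, hp, t, ht0, htlim, hball⟩ := h x (hsub hx)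
  exact ⟨v, hv, p, hp, t, ht0, htlim, fun n =>
    eq_empty_of_subset_empty ((inter_subset_inter_right _ hsub).trans (hball n).le)⟩

lemma dirPorous_empty : DirectionallyPorous (∅ : Set X) := fun x hx => absurd hx (notMem_empty x)

lemma porousAt_of_holes {A : Set X} {x v : X} {p : ℝ} (hp : 0 < p)
    (h : ∀ δ' > (0:ℝ), ∃ t : ℝ, 0 < t ∧ t < δ' ∧ ball (x + t • v) (p * t) ∩ A = ∅) :
    PorousAt A x v := by
  choose t ht0 htlt hball using fun n : ℕ => h (1/(n+1)) (by positivity)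
  refine ⟨p, hp, t, ht0, ?_, hball⟩
  apply squeeze_zero (fun n => (ht0 n).le) (fun n => (htlt n).le)
  exact tendsto_one_div_add_atTop_nhds_zero_nat

lemma sigma_of_countable_union {ι : Type*} [Countable ι] (A : ι → Set X)
    (h : ∀ i, DirectionallyPorous (A i)) : SigmaDirectionallyPorous (⋃ i, A i) := by
  rcases isEmpty_or_nonempty ι with hι | hι
  · exact ⟨fun _ => ∅, fun _ => dirPorous_empty, by simp⟩
  · obtain ⟨g, hg⟩ := exists_surjective_nat ι
    refine ⟨fun n => A (g n), fun n => h (g n), ?_⟩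
    ext y; simp only [mem_iUnion]
    exact ⟨fun ⟨i, hi⟩ => (hg i).elim (fun n hn => ⟨n, hn ▸ hi⟩), fun ⟨n, hn⟩ => ⟨g n, hn⟩⟩

/-- Piece of type 3: closure failures. -/
def A3 (f : X → Y) (u₀ : X) (K δ ε : ℝ) : Set X :=
  {x | 1 ≤ K ∧ 0 < δ ∧ 0 < ε ∧ ε ≤ 1 ∧ LipC f x K δ ∧
    ∃ u Lu w M, ‖u‖ ≤ 1 ∧ ‖u - u₀‖ ≤ ε/(100*K) ∧ UD f x u Lu δ (ε/100) ∧
      w ≠ 0 ∧ ‖w‖ ≤ 1 ∧ ‖w - u₀‖ ≤ ε/(100*K) ∧ ‖M - Lu‖ ≤ 2*K*(ε/(100*K)) ∧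
      ∀ δ' > (0:ℝ), ∃ t : ℝ, 0 < t ∧ t < δ' ∧
        ε * t ≤ ‖f (x + t • w) - f x - t • M‖}

lemma A3_porous (f : X → Y) (u₀ : X) (K δ ε : ℝ) : DirectionallyPorous (A3 f u₀ K δ ε) := by
  intro x hx
  obtain ⟨hK, hδ, hε, hε1, hLip, u, Lu, w, M, hu1, huu0, hUD, hw0, hw1, hwu0, hML, hbad⟩ := hx
  set l := ε/(100*K) with hl_def
  have hK0 : (0:ℝ) < K := lt_of_lt_of_le one_pos hK
  have hl0 : 0 < l := by positivity
  have hl1 : l ≤ 1/100 := by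
    rw [hl_def, div_le_div_iff₀ (by positivity) (by norm_num)]
    nlinarith
  have key : ∀ t : ℝ, 0 < t → t ≤ δ → ε * t ≤ ‖f (x + t • w) - f x - t • M‖ →
      ball (x + t • w) (l * t) ∩ A3 f u₀ K δ ε = ∅ := by
    intro t ht0 htδ hdef
    by_contra hne
    obtain ⟨z, hzball, hzA⟩ := nonempty_iff_ne_empty.2 hne
    obtain ⟨-, -, -, -, hzLip, -⟩ := hzA
    rw [mem_ball, dist_eq_norm] at hzball
    have hz : ‖z - (x + t • w)‖ ≤ l * t := hzball.le
    have huw : ‖u - w‖ ≤ 2*l :=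
      calc ‖u - w‖ = ‖(u - u₀) - (w - u₀)‖ := by abel_nf
        _ ≤ ‖u - u₀‖ + ‖w - u₀‖ := norm_sub_le _ _
        _ ≤ 2*l := by linarith
    -- (1)
    have h1 : ‖f (x + t • w) - f z‖ ≤ K * (l*t) := by
      have hn : ‖(x + t • w) - z‖ ≤ l*t := by rw [← norm_neg]; simpa [neg_sub] using hz
      calc ‖f (x + t • w) - f z‖ ≤ K * ‖(x + t • w) - z‖ :=
            hzLip _ (hn.trans (by nlinarith))
        _ ≤ K * (l*t) := by nlinarith
    -- (2)
    have h2 : ‖f (x + t • u) - f z‖ ≤ K * (3*l*t) := by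
      have hn : ‖(x + t • u) - z‖ ≤ 3*l*t := by
        calc ‖(x + t • u) - z‖ = ‖(t • (u - w)) + ((x + t • w) - z)‖ := by
              congr 1; module
          _ ≤ ‖t • (u - w)‖ + ‖(x + t • w) - z‖ := norm_add_le _ _
          _ ≤ t * (2*l) + l*t := by
              rw [norm_smul, Real.norm_eq_abs, abs_of_pos ht0]
              have : ‖(x + t • w) - z‖ ≤ l*t := by rw [← norm_neg]; simpa [neg_sub] using hz
              nlinarith [norm_nonneg (u-w)]
          _ = 3*l*t := by ring
      calc ‖f (x + t • u) - f z‖ ≤ K * ‖(x + t • u) - z‖ := hzLip _ (hn.trans (by nlinarith))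
        _ ≤ K * (3*l*t) := by nlinarith
    -- (3)
    have h3 : ‖f (x + t • u) - f x - t • Lu‖ ≤ (ε/100) * t := hUD t ht0 htδ
    have hLM : ‖t • (Lu - M)‖ ≤ 2*K*l*t := by
      rw [norm_smul, Real.norm_eq_abs, abs_of_pos ht0, ← norm_neg, neg_sub]
      nlinarith [hML, norm_nonneg (M - Lu)]
    have hsplit : f (x + t • w) - f x - t • M =
        (f (x + t • w) - f z) - (f (x + t • u) - f z) +
        (f (x + t • u) - f x - t • Lu) + t • (Lu - M) := by
      rw [smul_sub]; abel
    have : ‖f (x + t • w) - f x - t • M‖ ≤ K*(l*t) + K*(3*l*t) + (ε/100)*t + 2*K*l*t := by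
      rw [hsplit]
      refine le_trans (norm_add_le _ _) ?_
      gcongr
      refine le_trans (norm_add_le _ _) ?_
      gcongr
      exact le_trans (norm_sub_le _ _) (by linarith)
    have hKl : K * l = ε/100 := by rw [hl_def]; field_simp
    have e : K*(l*t) + K*(3*l*t) + (ε/100)*t + 2*K*l*t = 6*(K*l)*t + (ε/100)*t := by ring
    rw [hKl] at e
    have hb : ‖f (x + t • w) - f x - t • M‖ ≤ (7/100)*(ε*t) := by
      rw [e] at this; linarith [this]
    have hpos : 0 < ε * t := mul_pos hε ht0
    linarith
  refine ⟨w, hw0, porousAt_of_holes hl0 ?_⟩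
  intro δ' hδ'
  obtain ⟨t, ht0, htlt, hdef⟩ := hbad (min δ' δ) (lt_min hδ' hδ)
  exact ⟨t, ht0, htlt.trans_le (min_le_left _ _),
    key t ht0 ((htlt.trans_le (min_le_right _ _)).le) hdef⟩

end Porous

section Porous2
variable {X Y : Type*} [NormedAddCommGroup X] [NormedSpace ℝ X]
  [NormedAddCommGroup Y] [NormedSpace ℝ Y]

lemma norm_add5 {Y : Type*} [NormedAddCommGroup Y] (a b c d e : Y) :
    ‖a + b + c - d - e‖ ≤ ‖a‖ + ‖b‖ + ‖c‖ + ‖d‖ + ‖e‖ := by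
  calc ‖a + b + c - d - e‖ ≤ ‖a + b + c - d‖ + ‖e‖ := norm_sub_le _ _
    _ ≤ (‖a + b + c‖ + ‖d‖) + ‖e‖ := by linarith [norm_sub_le (a+b+c) d]
    _ ≤ ((‖a + b‖ + ‖c‖) + ‖d‖) + ‖e‖ := by linarith [norm_add_le (a+b) c]
    _ ≤ ‖a‖ + ‖b‖ + ‖c‖ + ‖d‖ + ‖e‖ := by linarith [norm_add_le a b]

/-- Comparison of derivative values at two nearby points, via a third point. -/
lemma value_comp {f : X → Y} {x z₁ z₃ u u₁ : X} {Lu L₁ : Y} {K l δ s t : ℝ}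
    (hK : 1 ≤ K) (hl0 : 0 < l) (hl1 : l ≤ 1/100)
    (hs0 : 0 < s) (hsδ : s ≤ δ) (hts : t = l*s)
    (hu1 : ‖u‖ ≤ 1) (huu₁ : ‖u₁ - u‖ ≤ 2*l)
    (hz₁Lip : LipC f z₁ K δ) (hz₃Lip : LipC f z₃ K δ)
    (hUDx : UD f x u Lu δ (K*l)) (hUDz₁ : UD f z₁ u₁ L₁ δ (K*l))
    (hz₁pos : ‖z₁ - x‖ ≤ 2*t) (hz₃ : ‖z₃ - (x + s • u)‖ ≤ l*s) :
    ‖L₁ - Lu‖ ≤ 10*K*l := by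
  subst hts
  have hK0 : (0:ℝ) < K := lt_of_lt_of_le one_pos hK
  have h1 : ‖f (z₁ + s • u₁) - f z₁ - s • L₁‖ ≤ K*l*s := hUDz₁ s hs0 hsδ
  have h2 : ‖f (x + s • u) - f x - s • Lu‖ ≤ K*l*s := hUDx s hs0 hsδ
  have hray : ‖z₁ + s • u₁ - (x + s • u)‖ ≤ 2*(l*s) + 2*l*s := by
    calc ‖z₁ + s • u₁ - (x + s • u)‖ = ‖(z₁ - x) + s • (u₁ - u)‖ := by congr 1; module
      _ ≤ ‖z₁ - x‖ + ‖s • (u₁ - u)‖ := norm_add_le _ _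
      _ ≤ 2*(l*s) + 2*l*s := by
          rw [norm_smul, Real.norm_eq_abs, abs_of_pos hs0]
          nlinarith [norm_nonneg (u₁ - u)]
  have h3 : ‖f (z₁ + s • u₁) - f z₃‖ ≤ K*(5*(l*s)) := by
    have hn : ‖(z₁ + s • u₁) - z₃‖ ≤ 5*(l*s) := by
      calc ‖(z₁ + s • u₁) - z₃‖ = ‖(z₁ + s • u₁ - (x + s • u)) + ((x + s • u) - z₃)‖ := by
            congr 1; module
        _ ≤ ‖z₁ + s • u₁ - (x + s • u)‖ + ‖(x + s • u) - z₃‖ := norm_add_le _ _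
        _ ≤ (2*(l*s) + 2*l*s) + l*s := by
            have : ‖(x + s • u) - z₃‖ ≤ l*s := by rw [← norm_neg]; simpa [neg_sub] using hz₃
            linarith
        _ = 5*(l*s) := by ring
    calc ‖f (z₁ + s • u₁) - f z₃‖ ≤ K * ‖(z₁ + s • u₁) - z₃‖ :=
          hz₃Lip _ (hn.trans (by nlinarith))
      _ ≤ K*(5*(l*s)) := by nlinarith
  have h4 : ‖f (x + s • u) - f z₃‖ ≤ K*(l*s) := by
    have hn : ‖(x + s • u) - z₃‖ ≤ l*s := by rw [← norm_neg]; simpa [neg_sub] using hz₃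
    calc ‖f (x + s • u) - f z₃‖ ≤ K * ‖(x + s • u) - z₃‖ := hz₃Lip _ (hn.trans (by nlinarith))
      _ ≤ K*(l*s) := by nlinarith
  have h5 : ‖f z₁ - f x‖ ≤ K*(2*(l*s)) := by
    have hn : ‖x - z₁‖ ≤ 2*(l*s) := by rw [← norm_neg]; simpa [neg_sub] using hz₁pos
    have := hz₁Lip x (hn.trans (by nlinarith))
    rw [← norm_neg, neg_sub] at this
    calc ‖f z₁ - f x‖ ≤ K * ‖x - z₁‖ := this
      _ ≤ K*(2*(l*s)) := by nlinarith
  have hid : s • L₁ - s • Lu =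
      -(f (z₁ + s • u₁) - f z₁ - s • L₁) + (f (x + s • u) - f x - s • Lu) +
      (f (z₁ + s • u₁) - f z₃) - (f (x + s • u) - f z₃) - (f z₁ - f x) := by abel
  have hbound : ‖s • L₁ - s • Lu‖ ≤ 10*K*l*s := by
    rw [hid]
    have step := norm_add5 (-(f (z₁ + s • u₁) - f z₁ - s • L₁))
      (f (x + s • u) - f x - s • Lu) (f (z₁ + s • u₁) - f z₃)
      (f (x + s • u) - f z₃) (f z₁ - f x)
    rw [norm_neg] at step
    refine step.trans ?_
    nlinarith [h1, h2, h3, h4, h5]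
  rw [← smul_sub, norm_smul, Real.norm_eq_abs, abs_of_pos hs0] at hbound
  calc ‖L₁ - Lu‖ = s * ‖L₁ - Lu‖ / s := by field_simp
    _ ≤ 10*K*l*s / s := by gcongr
    _ = 10*K*l := by field_simp
end Porous2

section Porous3
variable {X Y : Type*} [NormedAddCommGroup X] [NormedSpace ℝ X]
  [NormedAddCommGroup Y] [NormedSpace ℝ Y]

lemma norm_add6 {Y : Type*} [NormedAddCommGroup Y] (a b c d e g : Y) :
    ‖a - b + c - d + e + g‖ ≤ ‖a‖ + ‖b‖ + ‖c‖ + ‖d‖ + ‖e‖ + ‖g‖ := by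
  calc ‖a - b + c - d + e + g‖ ≤ ‖a - b + c - d + e‖ + ‖g‖ := norm_add_le _ _
    _ ≤ (‖a - b + c - d‖ + ‖e‖) + ‖g‖ := by linarith [norm_add_le (a-b+c-d) e]
    _ ≤ ((‖a - b + c‖ + ‖d‖) + ‖e‖) + ‖g‖ := by linarith [norm_sub_le (a-b+c) d]
    _ ≤ (((‖a - b‖ + ‖c‖) + ‖d‖) + ‖e‖) + ‖g‖ := by linarith [norm_add_le (a-b) c]
    _ ≤ ‖a‖ + ‖b‖ + ‖c‖ + ‖d‖ + ‖e‖ + ‖g‖ := by linarith [norm_sub_le a b]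

/-- Piece of type 1: additivity failures. -/
def A1 (f : X → Y) (u₀ v₀ : X) (K δ ε : ℝ) : Set X :=
  {x | 1 ≤ K ∧ 0 < δ ∧ 0 < ε ∧ ε ≤ 1 ∧ LipC f x K δ ∧
    ∃ u v Lu Lv, u ≠ 0 ∧ v ≠ 0 ∧ ‖u‖ ≤ 1 ∧ ‖v‖ ≤ 1 ∧
      ‖u - u₀‖ ≤ ε/(100*K) ∧ ‖v - v₀‖ ≤ ε/(100*K) ∧
      UD f x u Lu δ (ε/100) ∧ UD f x v Lv δ (ε/100) ∧
      ∀ δ' > (0:ℝ), ∃ t : ℝ, 0 < t ∧ t < δ' ∧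
        ε * t ≤ ‖f (x + t • (u + v)) - f x - t • (Lu + Lv)‖}

set_option maxHeartbeats 1000000 in
lemma A1_porous (f : X → Y) (u₀ v₀ : X) (K δ ε : ℝ) :
    DirectionallyPorous (A1 f u₀ v₀ K δ ε) := by
  intro x hx
  have hxA := hx
  obtain ⟨hK, hδ, hε, hε1, hLip, u, v, Lu, Lv, hu0, hv0, hu1, hv1, huu0, hvv0,
    hUDu, hUDv, hbad⟩ := hx
  set l := ε/(100*K) with hl_def
  have hK0 : (0:ℝ) < K := lt_of_lt_of_le one_pos hK
  have hl0 : 0 < l := by positivity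
  have hl1 : l ≤ 1/100 := by
    rw [hl_def, div_le_div_iff₀ (by positivity) (by norm_num)]; nlinarith
  have hKl : K * l = ε/100 := by rw [hl_def]; field_simp
  have hUDu' : UD f x u Lu δ (K*l) := by rw [hKl]; exact hUDu
  have hUDv' : UD f x v Lv δ (K*l) := by rw [hKl]; exact hUDv
  set A := A1 f u₀ v₀ K δ ε with hA_def
  have key : ∀ s : ℝ, 0 < s → s ≤ δ →
      ε*(l*s) ≤ ‖f (x + (l*s) • (u + v)) - f x - (l*s) • (Lu + Lv)‖ →
      (ball (x + (l*s) • v) (l*(l*s)) ∩ A).Nonempty →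
      (ball (x + (l*s) • (u+v)) (l*(l*s)) ∩ A).Nonempty →
      (ball (x + s • u) (l*s) ∩ A).Nonempty → False := by
    intro s hs0 hsδ hdef ⟨z₁, hz₁ball, hz₁A⟩ ⟨z₂, hz₂ball, hz₂A⟩ ⟨z₃, hz₃ball, hz₃A⟩
    set t := l*s with ht_def
    have ht0 : 0 < t := by positivity
    have htδ : t ≤ δ := by
      calc t = l*s := rfl
        _ ≤ 1*s := by nlinarith
        _ ≤ δ := by linarith
    obtain ⟨-, -, -, -, hz₁Lip, u₁, v₁, L₁, M₁, -, -, hu₁1, -, hu₁u0, -, hUD₁, -, -⟩ := hz₁A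
    obtain ⟨-, -, -, -, hz₂Lip, -⟩ := hz₂A
    obtain ⟨-, -, -, -, hz₃Lip, -⟩ := hz₃A
    rw [mem_ball, dist_eq_norm] at hz₁ball hz₂ball hz₃ball
    have hz₁b : ‖z₁ - (x + t • v)‖ ≤ l*t := hz₁ball.le
    have hz₂b : ‖z₂ - (x + t • (u+v))‖ ≤ l*t := hz₂ball.le
    have hz₃b : ‖z₃ - (x + s • u)‖ ≤ l*s := hz₃ball.le
    have hUD₁' : UD f z₁ u₁ L₁ δ (K*l) := by rw [hKl]; exact hUD₁
    have huu₁ : ‖u₁ - u‖ ≤ 2*l :=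
      calc ‖u₁ - u‖ = ‖(u₁ - u₀) - (u - u₀)‖ := by abel_nf
        _ ≤ ‖u₁ - u₀‖ + ‖u - u₀‖ := norm_sub_le _ _
        _ ≤ 2*l := by linarith
    have hz₁pos : ‖z₁ - x‖ ≤ 2*t := by
      calc ‖z₁ - x‖ = ‖(z₁ - (x + t • v)) + t • v‖ := by congr 1; module
        _ ≤ ‖z₁ - (x + t • v)‖ + ‖t • v‖ := norm_add_le _ _
        _ ≤ l*t + t*1 := by
            rw [norm_smul, Real.norm_eq_abs, abs_of_pos ht0]
            exact add_le_add hz₁b (by nlinarith)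
        _ ≤ 2*t := by nlinarith
    have hcomp : ‖L₁ - Lu‖ ≤ 10*K*l :=
      value_comp hK hl0 hl1 hs0 hsδ ht_def hu1 huu₁ hz₁Lip hz₃Lip hUDu' hUD₁' hz₁pos hz₃b
    -- main chain
    have hj : ‖f (x + t • (u+v)) - f z₂‖ ≤ K*(l*t) := by
      have hn : ‖(x + t • (u+v)) - z₂‖ ≤ l*t := by rw [← norm_neg]; simpa [neg_sub] using hz₂b
      calc ‖f (x + t • (u+v)) - f z₂‖ ≤ K * ‖(x + t • (u+v)) - z₂‖ :=
            hz₂Lip _ (hn.trans (by nlinarith))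
        _ ≤ K*(l*t) := by nlinarith
    have hk : ‖f (z₁ + t • u₁) - f z₂‖ ≤ K*(4*l*t) := by
      have hn : ‖(z₁ + t • u₁) - z₂‖ ≤ 4*l*t := by
        calc ‖(z₁ + t • u₁) - z₂‖
            = ‖(z₁ - (x + t • v)) + t • (u₁ - u) - (z₂ - (x + t • (u+v)))‖ := by
              congr 1; module
          _ ≤ ‖(z₁ - (x + t • v)) + t • (u₁ - u)‖ + ‖z₂ - (x + t • (u+v))‖ := norm_sub_le _ _
          _ ≤ (‖z₁ - (x + t • v)‖ + ‖t • (u₁ - u)‖) + ‖z₂ - (x + t • (u+v))‖ := by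
              gcongr; exact norm_add_le _ _
          _ ≤ (l*t + t*(2*l)) + l*t := by
              rw [norm_smul, Real.norm_eq_abs, abs_of_pos ht0]
              gcongr
          _ ≤ 4*l*t := by nlinarith
      calc ‖f (z₁ + t • u₁) - f z₂‖ ≤ K * ‖(z₁ + t • u₁) - z₂‖ :=
            hz₂Lip _ (hn.trans (by nlinarith))
        _ ≤ K*(4*l*t) := by nlinarith
    have hd : ‖f (z₁ + t • u₁) - f z₁ - t • L₁‖ ≤ K*l*t := hUD₁' t ht0 htδ
    have hb : ‖f (x + t • v) - f z₁‖ ≤ K*(l*t) := by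
      have hn : ‖(x + t • v) - z₁‖ ≤ l*t := by rw [← norm_neg]; simpa [neg_sub] using hz₁b
      calc ‖f (x + t • v) - f z₁‖ ≤ K * ‖(x + t • v) - z₁‖ :=
            hz₁Lip _ (hn.trans (by nlinarith))
        _ ≤ K*(l*t) := by nlinarith
    have hc : ‖f (x + t • v) - f x - t • Lv‖ ≤ K*l*t := hUDv' t ht0 htδ
    have hLL : ‖t • (L₁ - Lu)‖ ≤ t*(10*K*l) := by
      rw [norm_smul, Real.norm_eq_abs, abs_of_pos ht0]
      nlinarith [hcomp, norm_nonneg (L₁ - Lu)]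
    have hid : f (x + t • (u+v)) - f x - t • (Lu + Lv) =
        (f (x + t • (u+v)) - f z₂) - (f (z₁ + t • u₁) - f z₂) +
        (f (z₁ + t • u₁) - f z₁ - t • L₁) - (f (x + t • v) - f z₁) +
        (f (x + t • v) - f x - t • Lv) + t • (L₁ - Lu) := by
      simp only [smul_add, smul_sub]; abel
    have hnorm := norm_add6 (f (x + t • (u+v)) - f z₂) (f (z₁ + t • u₁) - f z₂)
      (f (z₁ + t • u₁) - f z₁ - t • L₁) (f (x + t • v) - f z₁)
      (f (x + t • v) - f x - t • Lv) (t • (L₁ - Lu))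
    rw [← hid] at hnorm
    have hfinal : ‖f (x + t • (u+v)) - f x - t • (Lu + Lv)‖ ≤ 18*(K*l)*t := by
      refine hnorm.trans ?_
      nlinarith [hj, hk, hd, hb, hc, hLL]
    rw [hKl] at hfinal
    have hpos : 0 < ε * t := mul_pos hε ht0
    linarith
  -- case analysis producing porosity
  by_cases hP3 : ∀ δ' > (0:ℝ), ∃ s : ℝ, 0 < s ∧ s < δ' ∧ ball (x + s • u) (l*s) ∩ A = ∅
  · exact ⟨u, hu0, porousAt_of_holes hl0 hP3⟩
  push_neg at hP3
  obtain ⟨δ₃, hδ₃, hP3⟩ := hP3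
  by_cases hP1 : ∀ δ' > (0:ℝ), ∃ t : ℝ, 0 < t ∧ t < δ' ∧ ball (x + t • v) (l*t) ∩ A = ∅
  · exact ⟨v, hv0, porousAt_of_holes hl0 hP1⟩
  push_neg at hP1
  obtain ⟨δ₁, hδ₁, hP1⟩ := hP1
  have main : ∀ δ₂ : ℝ, 0 < δ₂ →
      (∀ t : ℝ, 0 < t → t < δ₂ → (ball (x + t • (u+v)) (l*t) ∩ A).Nonempty) → False := by
    intro δ₂ hδ₂ hP2
    obtain ⟨t, ht0, htlt, hdef⟩ := hbad (min (min δ₁ δ₂) (min (l*δ₃) (l*δ))) (by positivity)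
    set s := t/l with hs_def
    have hs0 : 0 < s := by positivity
    have hts : t = l*s := by rw [hs_def]; field_simp
    have hsδ : s ≤ δ := by
      rw [hs_def, div_le_iff₀ hl0]
      have := htlt.trans_le ((min_le_right _ _).trans (min_le_right _ _))
      linarith [this]
    have hsδ₃ : s < δ₃ := by
      rw [hs_def, div_lt_iff₀ hl0]
      have := htlt.trans_le ((min_le_right _ _).trans (min_le_left _ _))
      linarith [this]
    have h1 : (ball (x + t • v) (l*t) ∩ A).Nonempty :=
      hP1 t ht0 (htlt.trans_le ((min_le_left _ _).trans (min_le_left _ _)))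
    have h3 : (ball (x + s • u) (l*s) ∩ A).Nonempty := hP3 s hs0 hsδ₃
    have h2 : (ball (x + t • (u+v)) (l*t) ∩ A).Nonempty :=
      hP2 t ht0 (htlt.trans_le ((min_le_left _ _).trans (min_le_right _ _)))
    rw [hts] at hdef h1 h2
    exact key s hs0 hsδ hdef h1 h2 h3
  by_cases huv : u + v = 0
  · exfalso
    apply main 1 one_pos
    intro t ht0 _
    refine ⟨x, ?_, hxA⟩
    rw [mem_ball, dist_eq_norm, huv]
    simp [ht0, hl0, mul_pos hl0 ht0]
  · by_cases hP2 : ∀ δ' > (0:ℝ), ∃ t : ℝ, 0 < t ∧ t < δ' ∧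
        ball (x + t • (u+v)) (l*t) ∩ A = ∅
    · exact ⟨u+v, huv, porousAt_of_holes hl0 hP2⟩
    · exfalso
      push_neg at hP2
      obtain ⟨δ₂, hδ₂, hP2⟩ := hP2
      exact main δ₂ hδ₂ hP2
end Porous3

section Porous4
variable {X Y : Type*} [NormedAddCommGroup X] [NormedSpace ℝ X]
  [NormedAddCommGroup Y] [NormedSpace ℝ Y]

lemma norm_add4 {Y : Type*} [NormedAddCommGroup Y] (a b c d : Y) :
    ‖a - b + c + d‖ ≤ ‖a‖ + ‖b‖ + ‖c‖ + ‖d‖ := by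
  calc ‖a - b + c + d‖ ≤ ‖a - b + c‖ + ‖d‖ := norm_add_le _ _
    _ ≤ (‖a - b‖ + ‖c‖) + ‖d‖ := by linarith [norm_add_le (a-b) c]
    _ ≤ ‖a‖ + ‖b‖ + ‖c‖ + ‖d‖ := by linarith [norm_sub_le a b]

/-- Piece of type 2: negation failures. -/
def A2 (f : X → Y) (u₀ : X) (K δ ε : ℝ) : Set X :=
  {x | 1 ≤ K ∧ 0 < δ ∧ 0 < ε ∧ ε ≤ 1 ∧ LipC f x K δ ∧
    ∃ u Lu, u ≠ 0 ∧ ‖u‖ ≤ 1 ∧ ‖u - u₀‖ ≤ ε/(100*K) ∧ UD f x u Lu δ (ε/100) ∧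
      ∀ δ' > (0:ℝ), ∃ t : ℝ, 0 < t ∧ t < δ' ∧
        ε * t ≤ ‖f (x + t • (-u)) - f x + t • Lu‖}

set_option maxHeartbeats 1000000 in
lemma A2_porous (f : X → Y) (u₀ : X) (K δ ε : ℝ) :
    DirectionallyPorous (A2 f u₀ K δ ε) := by
  intro x hx
  obtain ⟨hK, hδ, hε, hε1, hLip, u, Lu, hu0, hu1, huu0, hUDu, hbad⟩ := hx
  set l := ε/(100*K) with hl_def
  have hK0 : (0:ℝ) < K := lt_of_lt_of_le one_pos hK
  have hl0 : 0 < l := by positivity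
  have hl1 : l ≤ 1/100 := by
    rw [hl_def, div_le_div_iff₀ (by positivity) (by norm_num)]; nlinarith
  have hKl : K * l = ε/100 := by rw [hl_def]; field_simp
  have hUDu' : UD f x u Lu δ (K*l) := by rw [hKl]; exact hUDu
  set A := A2 f u₀ K δ ε with hA_def
  have key : ∀ s : ℝ, 0 < s → s ≤ δ →
      ε*(l*s) ≤ ‖f (x + (l*s) • (-u)) - f x + (l*s) • Lu‖ →
      (ball (x + (l*s) • (-u)) (l*(l*s)) ∩ A).Nonempty →
      (ball (x + s • u) (l*s) ∩ A).Nonempty → False := by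
    intro s hs0 hsδ hdef ⟨z₁, hz₁ball, hz₁A⟩ ⟨z₃, hz₃ball, hz₃A⟩
    set t := l*s with ht_def
    have ht0 : 0 < t := by positivity
    have htδ : t ≤ δ := by
      calc t = l*s := rfl
        _ ≤ 1*s := by nlinarith
        _ ≤ δ := by linarith
    obtain ⟨-, -, -, -, hz₁Lip, u₁, L₁, -, hu₁1, hu₁u0, hUD₁, -⟩ := hz₁A
    obtain ⟨-, -, -, -, hz₃Lip, -⟩ := hz₃A
    rw [mem_ball, dist_eq_norm] at hz₁ball hz₃ball
    have hz₁b : ‖z₁ - (x + t • (-u))‖ ≤ l*t := hz₁ball.le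
    have hz₃b : ‖z₃ - (x + s • u)‖ ≤ l*s := hz₃ball.le
    have hUD₁' : UD f z₁ u₁ L₁ δ (K*l) := by rw [hKl]; exact hUD₁
    have huu₁ : ‖u₁ - u‖ ≤ 2*l :=
      calc ‖u₁ - u‖ = ‖(u₁ - u₀) - (u - u₀)‖ := by abel_nf
        _ ≤ ‖u₁ - u₀‖ + ‖u - u₀‖ := norm_sub_le _ _
        _ ≤ 2*l := by linarith
    have hz₁pos : ‖z₁ - x‖ ≤ 2*t := by
      calc ‖z₁ - x‖ = ‖(z₁ - (x + t • (-u))) + t • (-u)‖ := by congr 1; module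
        _ ≤ ‖z₁ - (x + t • (-u))‖ + ‖t • (-u)‖ := norm_add_le _ _
        _ ≤ l*t + t*1 := by
            rw [norm_smul, Real.norm_eq_abs, abs_of_pos ht0, norm_neg]
            exact add_le_add hz₁b (by nlinarith)
        _ ≤ 2*t := by nlinarith
    have hcomp : ‖L₁ - Lu‖ ≤ 10*K*l :=
      value_comp hK hl0 hl1 hs0 hsδ ht_def hu1 huu₁ hz₁Lip hz₃Lip hUDu' hUD₁' hz₁pos hz₃b
    have hb : ‖f (x + t • (-u)) - f z₁‖ ≤ K*(l*t) := by
      have hn : ‖(x + t • (-u)) - z₁‖ ≤ l*t := by rw [← norm_neg]; simpa [neg_sub] using hz₁b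
      calc ‖f (x + t • (-u)) - f z₁‖ ≤ K * ‖(x + t • (-u)) - z₁‖ :=
            hz₁Lip _ (hn.trans (by nlinarith))
        _ ≤ K*(l*t) := by nlinarith
    have hd : ‖f (z₁ + t • u₁) - f z₁ - t • L₁‖ ≤ K*l*t := hUD₁' t ht0 htδ
    have hl2 : ‖f (z₁ + t • u₁) - f x‖ ≤ K*(3*l*t) := by
      have hn : ‖(z₁ + t • u₁) - x‖ ≤ 3*l*t := by
        calc ‖(z₁ + t • u₁) - x‖ = ‖(z₁ - (x + t • (-u))) + t • (u₁ - u)‖ := by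
              congr 1; module
          _ ≤ ‖z₁ - (x + t • (-u))‖ + ‖t • (u₁ - u)‖ := norm_add_le _ _
          _ ≤ l*t + t*(2*l) := by
              rw [norm_smul, Real.norm_eq_abs, abs_of_pos ht0]
              exact add_le_add hz₁b (by nlinarith [norm_nonneg (u₁ - u)])
          _ ≤ 3*l*t := by nlinarith
      calc ‖f (z₁ + t • u₁) - f x‖ ≤ K * ‖(z₁ + t • u₁) - x‖ := hLip _ (hn.trans (by nlinarith))
        _ ≤ K*(3*l*t) := by nlinarith
    have hLL : ‖t • (Lu - L₁)‖ ≤ t*(10*K*l) := by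
      rw [norm_smul, Real.norm_eq_abs, abs_of_pos ht0, ← norm_neg, neg_sub]
      nlinarith [hcomp, norm_nonneg (L₁ - Lu)]
    have hid : f (x + t • (-u)) - f x + t • Lu =
        (f (x + t • (-u)) - f z₁) - (f (z₁ + t • u₁) - f z₁ - t • L₁) +
        (f (z₁ + t • u₁) - f x) + t • (Lu - L₁) := by
      simp only [smul_sub]; abel
    have hnorm := norm_add4 (f (x + t • (-u)) - f z₁) (f (z₁ + t • u₁) - f z₁ - t • L₁)
      (f (z₁ + t • u₁) - f x) (t • (Lu - L₁))
    rw [← hid] at hnorm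
    have hfinal : ‖f (x + t • (-u)) - f x + t • Lu‖ ≤ 15*(K*l)*t := by
      refine hnorm.trans ?_
      nlinarith [hb, hd, hl2, hLL]
    rw [hKl] at hfinal
    have hpos : 0 < ε * t := mul_pos hε ht0
    linarith
  by_cases hP3 : ∀ δ' > (0:ℝ), ∃ s : ℝ, 0 < s ∧ s < δ' ∧ ball (x + s • u) (l*s) ∩ A = ∅
  · exact ⟨u, hu0, porousAt_of_holes hl0 hP3⟩
  push_neg at hP3
  obtain ⟨δ₃, hδ₃, hP3⟩ := hP3
  by_cases hP1 : ∀ δ' > (0:ℝ), ∃ t : ℝ, 0 < t ∧ t < δ' ∧ ball (x + t • (-u)) (l*t) ∩ A = ∅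
  · exact ⟨-u, neg_ne_zero.2 hu0, porousAt_of_holes hl0 hP1⟩
  exfalso
  push_neg at hP1
  obtain ⟨δ₁, hδ₁, hP1⟩ := hP1
  obtain ⟨t, ht0, htlt, hdef⟩ := hbad (min δ₁ (min (l*δ₃) (l*δ))) (by positivity)
  set s := t/l with hs_def
  have hs0 : 0 < s := by positivity
  have hts : t = l*s := by rw [hs_def]; field_simp
  have hsδ : s ≤ δ := by
    rw [hs_def, div_le_iff₀ hl0]
    have := htlt.trans_le ((min_le_right _ _).trans (min_le_right _ _))
    linarith [this]
  have hsδ₃ : s < δ₃ := by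
    rw [hs_def, div_lt_iff₀ hl0]
    have := htlt.trans_le ((min_le_right _ _).trans (min_le_left _ _))
    linarith [this]
  have h1 : (ball (x + t • (-u)) (l*t) ∩ A).Nonempty :=
    hP1 t ht0 (htlt.trans_le (min_le_left _ _))
  have h3 : (ball (x + s • u) (l*s) ∩ A).Nonempty := hP3 s hs0 hsδ₃
  rw [hts] at hdef h1
  exact key s hs0 hsδ hdef h1 h3
end Porous4

section Good
variable {X Y : Type*} [NormedAddCommGroup X] [NormedSpace ℝ X]
  [NormedAddCommGroup Y] [NormedSpace ℝ Y]

lemma hasPos_smul_cancel {f : X → Y} {x u : X} {L : Y} {c : ℝ} (hc : 0 < c)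
    (h : HasPosDirDeriv f x (c • u) (c • L)) : HasPosDirDeriv f x u L := by
  have := hasPos_smul (inv_pos.2 hc) h
  rwa [smul_smul, smul_smul, inv_mul_cancel₀ hc.ne', one_smul, one_smul] at this

lemma hasPos_zero_val {f : X → Y} {x : X} {L : Y} (h : HasPosDirDeriv f x 0 L) : L = 0 :=
  (hasPos_unique h (hasPos_zero f x))

lemma good_add_norm {f : X → Y} {x : X} {e : ℕ → X} (he : DenseRange e) (Kq : ℚ)
    (hK : 1 ≤ (Kq:ℝ)) {δL : ℝ} (hδL : 0 < δL) (hLip : LipC f x Kq δL)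
    (hnot : ∀ (n m : ℕ) (dq eq : ℚ), x ∉ A1 f (e n) (e m) Kq dq eq)
    {u v : X} {Lu Lv : Y} (hu0 : u ≠ 0) (hv0 : v ≠ 0) (hu1 : ‖u‖ ≤ 1) (hv1 : ‖v‖ ≤ 1)
    (hu : HasPosDirDeriv f x u Lu) (hv : HasPosDirDeriv f x v Lv) :
    HasPosDirDeriv f x (u + v) (Lu + Lv) := by
  by_contra hne
  obtain ⟨ε₀, hε₀, hfreq⟩ := freq_of_not_hasPos hne
  obtain ⟨εq, hεq0, hεq1⟩ := exists_rat_btwn (show (0:ℝ) < min ε₀ 1 from lt_min hε₀ one_pos)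
  have hεq0' : 0 < (εq:ℝ) := hεq0
  have hεqε₀ : (εq:ℝ) ≤ ε₀ := (hεq1.le.trans (min_le_left _ _))
  have hεq1' : (εq:ℝ) ≤ 1 := (hεq1.le.trans (min_le_right _ _))
  have hl0 : (0:ℝ) < εq/(100*Kq) := by positivity
  obtain ⟨δ₁, hδ₁, hUD1⟩ := ud_of_hasPos hu (show (0:ℝ) < εq/100 by positivity)
  obtain ⟨δ₂, hδ₂, hUD2⟩ := ud_of_hasPos hv (show (0:ℝ) < εq/100 by positivity)
  obtain ⟨δq, hδq0, hδq1⟩ :=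
    exists_rat_btwn (show (0:ℝ) < min δL (min δ₁ δ₂) from lt_min hδL (lt_min hδ₁ hδ₂))
  have hδq0' : 0 < (δq:ℝ) := hδq0
  obtain ⟨n, hn⟩ := he.exists_dist_lt u hl0
  obtain ⟨m, hm⟩ := he.exists_dist_lt v hl0
  rw [dist_eq_norm] at hn
  rw [dist_eq_norm] at hm
  refine hnot n m δq εq ⟨hK, hδq0', hεq0', hεq1', hLip.mono (hδq1.le.trans (min_le_left _ _)),
    u, v, Lu, Lv, hu0, hv0, hu1, hv1, hn.le, hm.le,
    hUD1.mono (hδq1.le.trans ((min_le_right _ _).trans (min_le_left _ _))),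
    hUD2.mono (hδq1.le.trans ((min_le_right _ _).trans (min_le_right _ _))), ?_⟩
  intro δ' hδ'
  obtain ⟨t, ht0, htδ', hdef⟩ := hfreq δ' hδ'
  exact ⟨t, ht0, htδ', le_trans (by nlinarith) hdef⟩

lemma good_add {f : X → Y} {x : X} {e : ℕ → X} (he : DenseRange e) (Kq : ℚ)
    (hK : 1 ≤ (Kq:ℝ)) {δL : ℝ} (hδL : 0 < δL) (hLip : LipC f x Kq δL)
    (hnot : ∀ (n m : ℕ) (dq eq : ℚ), x ∉ A1 f (e n) (e m) Kq dq eq)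
    {u v : X} {Lu Lv : Y}
    (hu : HasPosDirDeriv f x u Lu) (hv : HasPosDirDeriv f x v Lv) :
    HasPosDirDeriv f x (u + v) (Lu + Lv) := by
  by_cases hu0 : u = 0
  · subst hu0
    have : Lu = 0 := hasPos_zero_val hu
    subst this; simpa using hv
  by_cases hv0 : v = 0
  · subst hv0
    have : Lv = 0 := hasPos_zero_val hv
    subst this; simpa using hu
  set c := (max ‖u‖ ‖v‖ + 1)⁻¹ with hc_def
  have hmax : (0:ℝ) < max ‖u‖ ‖v‖ + 1 := by positivity
  have hc : 0 < c := inv_pos.2 hmax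
  have hcu : ‖c • u‖ ≤ 1 := by
    rw [norm_smul, Real.norm_eq_abs, abs_of_pos hc, hc_def]
    rw [inv_mul_le_iff₀ hmax]
    nlinarith [le_max_left ‖u‖ ‖v‖]
  have hcv : ‖c • v‖ ≤ 1 := by
    rw [norm_smul, Real.norm_eq_abs, abs_of_pos hc, hc_def]
    rw [inv_mul_le_iff₀ hmax]
    nlinarith [le_max_right ‖u‖ ‖v‖]
  have hcu0 : c • u ≠ 0 := smul_ne_zero hc.ne' hu0
  have hcv0 : c • v ≠ 0 := smul_ne_zero hc.ne' hv0
  have h := good_add_norm he Kq hK hδL hLip hnot hcu0 hcv0 hcu hcv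
    (hasPos_smul hc hu) (hasPos_smul hc hv)
  rw [← smul_add, ← smul_add] at h
  exact hasPos_smul_cancel hc h

lemma good_neg_norm {f : X → Y} {x : X} {e : ℕ → X} (he : DenseRange e) (Kq : ℚ)
    (hK : 1 ≤ (Kq:ℝ)) {δL : ℝ} (hδL : 0 < δL) (hLip : LipC f x Kq δL)
    (hnot : ∀ (n : ℕ) (dq eq : ℚ), x ∉ A2 f (e n) Kq dq eq)
    {u : X} {Lu : Y} (hu0 : u ≠ 0) (hu1 : ‖u‖ ≤ 1)
    (hu : HasPosDirDeriv f x u Lu) : HasPosDirDeriv f x (-u) (-Lu) := by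
  by_contra hne
  obtain ⟨ε₀, hε₀, hfreq⟩ := freq_of_not_hasPos hne
  obtain ⟨εq, hεq0, hεq1⟩ := exists_rat_btwn (show (0:ℝ) < min ε₀ 1 from lt_min hε₀ one_pos)
  have hεq0' : 0 < (εq:ℝ) := hεq0
  have hεqε₀ : (εq:ℝ) ≤ ε₀ := (hεq1.le.trans (min_le_left _ _))
  have hεq1' : (εq:ℝ) ≤ 1 := (hεq1.le.trans (min_le_right _ _))
  have hl0 : (0:ℝ) < εq/(100*Kq) := by positivity
  obtain ⟨δ₁, hδ₁, hUD1⟩ := ud_of_hasPos hu (show (0:ℝ) < εq/100 by positivity)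
  obtain ⟨δq, hδq0, hδq1⟩ :=
    exists_rat_btwn (show (0:ℝ) < min δL δ₁ from lt_min hδL hδ₁)
  have hδq0' : 0 < (δq:ℝ) := hδq0
  obtain ⟨n, hn⟩ := he.exists_dist_lt u hl0
  rw [dist_eq_norm] at hn
  refine hnot n δq εq ⟨hK, hδq0', hεq0', hεq1', hLip.mono (hδq1.le.trans (min_le_left _ _)),
    u, Lu, hu0, hu1, hn.le,
    hUD1.mono (hδq1.le.trans (min_le_right _ _)), ?_⟩
  intro δ' hδ'
  obtain ⟨t, ht0, htδ', hdef⟩ := hfreq δ' hδ'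
  refine ⟨t, ht0, htδ', ?_⟩
  have heq : f (x + t • (-u)) - f x - t • (-Lu) = f (x + t • (-u)) - f x + t • Lu := by
    module
  rw [← heq]
  calc (εq:ℝ)*t ≤ ε₀*t := by nlinarith
    _ ≤ _ := hdef

lemma good_neg {f : X → Y} {x : X} {e : ℕ → X} (he : DenseRange e) (Kq : ℚ)
    (hK : 1 ≤ (Kq:ℝ)) {δL : ℝ} (hδL : 0 < δL) (hLip : LipC f x Kq δL)
    (hnot : ∀ (n : ℕ) (dq eq : ℚ), x ∉ A2 f (e n) Kq dq eq)
    {u : X} {Lu : Y} (hu : HasPosDirDeriv f x u Lu) : HasPosDirDeriv f x (-u) (-Lu) := by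
  by_cases hu0 : u = 0
  · subst hu0
    have : Lu = 0 := hasPos_zero_val hu
    subst this; simpa using hasPos_zero f x
  set c := (‖u‖ + 1)⁻¹ with hc_def
  have hmax : (0:ℝ) < ‖u‖ + 1 := by positivity
  have hc : 0 < c := inv_pos.2 hmax
  have hcu : ‖c • u‖ ≤ 1 := by
    rw [norm_smul, Real.norm_eq_abs, abs_of_pos hc, hc_def]
    rw [inv_mul_le_iff₀ hmax]
    linarith
  have hcu0 : c • u ≠ 0 := smul_ne_zero hc.ne' hu0
  have h := good_neg_norm he Kq hK hδL hLip hnot hcu0 hcu (hasPos_smul hc hu)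
  rw [← smul_neg, ← smul_neg] at h
  exact hasPos_smul_cancel hc h
end Good

section Good2
variable {X Y : Type*} [NormedAddCommGroup X] [NormedSpace ℝ X]
  [NormedAddCommGroup Y] [NormedSpace ℝ Y] [CompleteSpace Y]

lemma good_mem_closure {f : X → Y} {x : X} {e : ℕ → X} (he : DenseRange e) (Kq : ℚ)
    (hK : 1 ≤ (Kq:ℝ)) {δL : ℝ} (hδL : 0 < δL) (hLip : LipC f x (Kq:ℝ) δL)
    (hnot : ∀ (n : ℕ) (dq eq : ℚ), x ∉ A3 f (e n) Kq dq eq)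
    (hsub : ∀ (w w' : X) (L L' : Y), HasPosDirDeriv f x w L → HasPosDirDeriv f x w' L' →
      HasPosDirDeriv f x (w - w') (L - L'))
    {u : X} (hu2 : ‖u‖ ≤ 1/2)
    (hu : u ∈ closure {w : X | ∃ L, HasPosDirDeriv f x w L}) :
    ∃ L, HasPosDirDeriv f x u L := by
  by_cases hu0 : u = 0
  · exact ⟨0, hu0 ▸ hasPos_zero f x⟩
  obtain ⟨g, hgS, hgu⟩ := mem_closure_iff_seq_limit.1 hu
  choose L hL using hgS
  have hKq0 : (0:ℝ) < Kq := lt_of_lt_of_le one_pos hK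
  have hdiff : ∀ n m : ℕ, ‖L n - L m‖ ≤ Kq * ‖g n - g m‖ := fun n m =>
    norm_deriv_le hδL hLip (hsub _ _ _ _ (hL n) (hL m))
  have hgC : CauchySeq g := hgu.cauchySeq
  have hLC : CauchySeq L := by
    rw [Metric.cauchySeq_iff] at hgC ⊢
    intro ε hε
    obtain ⟨N, hN⟩ := hgC (ε / (Kq + 1)) (by positivity)
    refine ⟨N, fun m hm n hn => ?_⟩
    have h1 := hdiff m n
    have h2 := hN m hm n hn
    rw [dist_eq_norm] at h2 ⊢
    calc ‖L m - L n‖ ≤ Kq * ‖g m - g n‖ := h1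
      _ < Kq * (ε / (Kq + 1)) := by
          apply mul_lt_mul_of_pos_left h2 hKq0
      _ ≤ ε := by
          rw [mul_div_assoc', div_le_iff₀ (by positivity)]
          nlinarith
  obtain ⟨M, hM⟩ := cauchySeq_tendsto_of_complete hLC
  have hML : ∀ n, ‖M - L n‖ ≤ Kq * ‖u - g n‖ := by
    intro n
    have h1 : Tendsto (fun m => ‖L m - L n‖) atTop (𝓝 ‖M - L n‖) :=
      ((hM.sub tendsto_const_nhds).norm)
    have h2 : Tendsto (fun m => (Kq:ℝ) * ‖g m - g n‖) atTop (𝓝 ((Kq:ℝ) * ‖u - g n‖)) :=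
      tendsto_const_nhds.mul ((hgu.sub tendsto_const_nhds).norm)
    exact le_of_tendsto_of_tendsto' h1 h2 (fun m => hdiff m n)
  refine ⟨M, ?_⟩
  by_contra hne
  obtain ⟨ε₀, hε₀, hfreq⟩ := freq_of_not_hasPos hne
  obtain ⟨εq, hεq0, hεq1⟩ := exists_rat_btwn (show (0:ℝ) < min ε₀ 1 from lt_min hε₀ one_pos)
  have hεq0' : 0 < (εq:ℝ) := hεq0
  have hεqε₀ : (εq:ℝ) ≤ ε₀ := (hεq1.le.trans (min_le_left _ _))
  have hεq1' : (εq:ℝ) ≤ 1 := (hεq1.le.trans (min_le_right _ _))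
  set l := (εq:ℝ)/(100*Kq) with hl_def
  have hl0 : (0:ℝ) < l := by positivity
  obtain ⟨N, hN⟩ := Metric.tendsto_atTop.1 hgu (min (l/2) (1/2)) (by positivity)
  have hgul := hN N le_rfl
  rw [dist_eq_norm] at hgul
  have hgn1 : ‖g N‖ ≤ 1 := by
    have h1 : g N = (g N - u) + u := by abel
    calc ‖g N‖ = ‖(g N - u) + u‖ := by rw [← h1]
      _ ≤ ‖g N - u‖ + ‖u‖ := norm_add_le _ _
      _ ≤ 1 := by
          have := hgul.le.trans (min_le_right _ _)
          linarith
  have hugN : ‖u - g N‖ ≤ l/2 := by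
    rw [← norm_neg, neg_sub]
    exact hgul.le.trans (min_le_left _ _)
  have hML2 : ‖M - L N‖ ≤ 2*Kq*l := by
    calc ‖M - L N‖ ≤ Kq * ‖u - g N‖ := hML N
      _ ≤ Kq * (l/2) := by gcongr
      _ ≤ 2*Kq*l := by nlinarith
  obtain ⟨δ₁, hδ₁0, hUD1⟩ := ud_of_hasPos (hL N) (show (0:ℝ) < εq/100 by positivity)
  obtain ⟨δq, hδq0, hδq1⟩ := exists_rat_btwn (show (0:ℝ) < min δL δ₁ from lt_min hδL hδ₁0)
  have hδq0' : 0 < (δq:ℝ) := hδq0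
  obtain ⟨i, hi⟩ := he.exists_dist_lt (g N) (show (0:ℝ) < l/2 by positivity)
  rw [dist_eq_norm] at hi
  refine hnot i δq εq ⟨hK, hδq0', hεq0', hεq1',
    hLip.mono (hδq1.le.trans (min_le_left _ _)),
    g N, L N, u, M, hgn1, ?_, hUD1.mono (hδq1.le.trans (min_le_right _ _)),
    hu0, by linarith, ?_, ?_, ?_⟩
  · exact hi.le.trans (by rw [hl_def]; linarith)
  · calc ‖u - e i‖ = ‖(u - g N) + (g N - e i)‖ := by abel_nf
      _ ≤ ‖u - g N‖ + ‖g N - e i‖ := norm_add_le _ _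
      _ ≤ (εq:ℝ)/(100*Kq) := by rw [← hl_def]; linarith [hi.le]
  · exact hML2
  · intro δ' hδ'
    obtain ⟨t, ht0, htδ', hdef⟩ := hfreq δ' hδ'
    exact ⟨t, ht0, htδ', le_trans (by nlinarith) hdef⟩
end Good2

section Final
variable {X Y : Type*} [NormedAddCommGroup X] [NormedSpace ℝ X]
  [NormedAddCommGroup Y] [NormedSpace ℝ Y]

lemma lipc_of_lipschitzAtPt {f : X → Y} {x : X} (h : LipschitzAtPt f x) :
    ∃ Kq δq : ℚ, 1 ≤ (Kq:ℝ) ∧ 0 < (δq:ℝ) ∧ LipC f x Kq δq := by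
  obtain ⟨K, δ, hδ, hK⟩ := h
  obtain ⟨Kq, hKq⟩ := exists_rat_gt (max K 1)
  obtain ⟨δq, h1, h2⟩ := exists_rat_btwn hδ
  have h1' : (0:ℝ) < δq := by exact_mod_cast h1
  refine ⟨Kq, δq, ?_, h1', fun y hy => ?_⟩
  · linarith [le_max_right K 1]
  · have h3 := hK y (lt_of_le_of_lt hy h2)
    have h4 : K ≤ (Kq:ℝ) := (le_max_left K 1).trans hKq.le
    nlinarith [norm_nonneg (y - x), norm_nonneg (f y - f x)]
end Final


theorem stmt13 {X Y : Type*} [NormedAddCommGroup X] [NormedSpace ℝ X] [CompleteSpace X]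
    [TopologicalSpace.SeparableSpace X]
    [NormedAddCommGroup Y] [NormedSpace ℝ Y] [CompleteSpace Y]
    (G : Set X) (hG : IsOpen G) (f : X → Y) :
    ∃ C : Set X, SigmaDirectionallyPorous C ∧ C ⊆ G ∧
      ∀ x ∈ G \ C, LipschitzAtPt f x →
        ∃ U : Submodule ℝ X, (U : Set X) = {u : X | ∃ L, HasPosDirDeriv f x u L} ∧
          IsClosed (U : Set X) ∧
          ∃ T : U →ₗ[ℝ] Y, ∀ u : U, HasPosDirDeriv f x (u : X) (T u) := by
  classical
  haveI : Nonempty X := ⟨0⟩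
  set e : ℕ → X := TopologicalSpace.denseSeq X with he_def
  have he : DenseRange e := TopologicalSpace.denseRange_denseSeq X
  let ι := (ℕ × ℕ × ℚ × ℚ × ℚ) ⊕ ((ℕ × ℚ × ℚ × ℚ) ⊕ (ℕ × ℚ × ℚ × ℚ))
  let A : ι → Set X := fun i =>
    (Sum.elim
      (fun p : ℕ × ℕ × ℚ × ℚ × ℚ =>
        A1 f (e p.1) (e p.2.1) (p.2.2.1 : ℝ) (p.2.2.2.1 : ℝ) (p.2.2.2.2 : ℝ))
      (Sum.elim
        (fun p : ℕ × ℚ × ℚ × ℚ => A2 f (e p.1) (p.2.1 : ℝ) (p.2.2.1 : ℝ) (p.2.2.2 : ℝ))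
        (fun p : ℕ × ℚ × ℚ × ℚ => A3 f (e p.1) (p.2.1 : ℝ) (p.2.2.1 : ℝ) (p.2.2.2 : ℝ))) i) ∩ G
  refine ⟨⋃ i, A i, ?_, ?_, ?_⟩
  · apply sigma_of_countable_union
    intro i
    rcases i with p | p | p
    · exact dirPorous_mono inter_subset_left (A1_porous f (e p.1) (e p.2.1) _ _ _)
    · exact dirPorous_mono inter_subset_left (A2_porous f (e p.1) _ _ _)
    · exact dirPorous_mono inter_subset_left (A3_porous f (e p.1) _ _ _)
  · exact iUnion_subset (fun i => inter_subset_right)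
  · intro x hx hLipAt
    obtain ⟨hxG, hxC⟩ := hx
    have hnot1 : ∀ (n m : ℕ) (Kp dq eq : ℚ), x ∉ A1 f (e n) (e m) Kp dq eq := by
      intro n m Kp dq eq h
      exact hxC (mem_iUnion.2 ⟨Sum.inl (n, m, Kp, dq, eq), h, hxG⟩)
    have hnot2 : ∀ (n : ℕ) (Kp dq eq : ℚ), x ∉ A2 f (e n) Kp dq eq := by
      intro n Kp dq eq h
      exact hxC (mem_iUnion.2 ⟨Sum.inr (Sum.inl (n, Kp, dq, eq)), h, hxG⟩)
    have hnot3 : ∀ (n : ℕ) (Kp dq eq : ℚ), x ∉ A3 f (e n) Kp dq eq := by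
      intro n Kp dq eq h
      exact hxC (mem_iUnion.2 ⟨Sum.inr (Sum.inr (n, Kp, dq, eq)), h, hxG⟩)
    obtain ⟨Kq, δq, hK1, hδq, hLip⟩ := lipc_of_lipschitzAtPt hLipAt
    have hadd : ∀ (u v : X) (Lu Lv : Y), HasPosDirDeriv f x u Lu → HasPosDirDeriv f x v Lv →
        HasPosDirDeriv f x (u + v) (Lu + Lv) := fun u v Lu Lv hu hv =>
      good_add he Kq hK1 hδq hLip (fun n m dq eq => hnot1 n m Kq dq eq) hu hv
    have hneg : ∀ (u : X) (Lu : Y), HasPosDirDeriv f x u Lu →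
        HasPosDirDeriv f x (-u) (-Lu) := fun u Lu hu =>
      good_neg he Kq hK1 hδq hLip (fun n dq eq => hnot2 n Kq dq eq) hu
    have hsmulL : ∀ (c : ℝ) (u : X) (Lu : Y), HasPosDirDeriv f x u Lu →
        HasPosDirDeriv f x (c • u) (c • Lu) := by
      intro c u Lu hu
      rcases lt_trichotomy c 0 with hc | hc | hc
      · have h1 := hasPos_smul (show (0:ℝ) < -c by linarith) (hneg u Lu hu)
        rwa [smul_neg, smul_neg, neg_smul, neg_smul, neg_neg, neg_neg] at h1
      · subst hc
        simpa using hasPos_zero f x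
      · exact hasPos_smul hc hu
    have hsub : ∀ (w w' : X) (L L' : Y), HasPosDirDeriv f x w L → HasPosDirDeriv f x w' L' →
        HasPosDirDeriv f x (w - w') (L - L') := by
      intro w w' L L' hw hw'
      have := hadd w (-w') L (-L') hw (hneg w' L' hw')
      rwa [← sub_eq_add_neg, ← sub_eq_add_neg] at this
    set S : Set X := {u : X | ∃ L, HasPosDirDeriv f x u L} with hS_def
    have hSclosed : IsClosed S := by
      rw [← closure_subset_iff_isClosed]
      intro u hu
      set c : ℝ := (2*(‖u‖+1))⁻¹ with hc_def
      have hc : 0 < c := by positivity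
      have hmem : c • u ∈ closure S := by
        refine map_mem_closure (continuous_const_smul c) hu ?_
        rintro y ⟨L, hL⟩
        exact ⟨c • L, hsmulL c y L hL⟩
      have hnorm : ‖c • u‖ ≤ 1/2 := by
        rw [norm_smul, Real.norm_eq_abs, abs_of_pos hc, hc_def]
        rw [inv_mul_le_iff₀ (by positivity)]
        nlinarith [norm_nonneg u]
      obtain ⟨L, hL⟩ := good_mem_closure he Kq hK1 hδq hLip
        (fun n dq eq => hnot3 n Kq dq eq) hsub hnorm hmem
      refine ⟨c⁻¹ • L, ?_⟩
      have h2 := hasPos_smul (inv_pos.2 hc) hL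
      rwa [smul_smul, inv_mul_cancel₀ hc.ne', one_smul] at h2
    let U : Submodule ℝ X :=
      { carrier := S
        add_mem' := fun {a b} ha hb => by
          obtain ⟨La, hLa⟩ := ha; obtain ⟨Lb, hLb⟩ := hb
          exact ⟨La + Lb, hadd a b La Lb hLa hLb⟩
        zero_mem' := ⟨0, hasPos_zero f x⟩
        smul_mem' := fun c a ha => by
          obtain ⟨La, hLa⟩ := ha
          exact ⟨c • La, hsmulL c a La hLa⟩ }
    have hmemU : ∀ u : U, ∃ L, HasPosDirDeriv f x (u : X) L := fun u => u.2
    let D : U → Y := fun u => Classical.choose (hmemU u)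
    have hD : ∀ u : U, HasPosDirDeriv f x (u : X) (D u) := fun u =>
      Classical.choose_spec (hmemU u)
    refine ⟨U, rfl, hSclosed, ?_⟩
    refine ⟨{ toFun := D, map_add' := ?_, map_smul' := ?_ }, hD⟩
    · intro a b
      exact hasPos_unique (hD (a + b))
        (by push_cast; exact hadd a b (D a) (D b) (hD a) (hD b))
    · intro c a
      exact hasPos_unique (hD (c • a))
        (by push_cast; exact hsmulL c a (D a) (hD a))
end
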